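/- arXiv:math/9805084 — 8 statements merged into one kernel-verified Lean document; each statement's English description precedes it below -/
import Mathlib

section
/- Let D be a set of positive integers. The distance graph G(ℤ, D) is bipartite if and only if there exists a non-negative integer k such that every element of D is 2^k times an odd integer (i.e., the set (1/2^k)·D contains only odd integers). -/
/-- The distance graph on ℤ with distance set `D`: distinct integers are adjacent
exactly when the absolute value of their difference lies in `D`. -/
def distGraph (D : Set ℕ) : SimpleGraph ℤ where
  Adj x y := x ≠ y ∧ (x - y).natAbs ∈ D
  symm := by
    constructor
    intro x y ⟨h1, h2⟩
    exact ⟨h1.symm, by rw [← Int.natAbs_neg, neg_sub] at h2; exact h2⟩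
  loopless := by
    constructor
    intro x ⟨h, _⟩
    exact h rfl

lemma odd_cast_zmod_two {m : ℕ} (hm : Odd m) : (m : ZMod 2) = 1 := by
  have h1 : m ≡ 1 [MOD 2] := by
    have := Nat.odd_iff.mp hm
    unfold Nat.ModEq; omega
  calc (m : ZMod 2) = ((1 : ℕ) : ZMod 2) := (ZMod.natCast_eq_natCast_iff _ _ _).mpr h1
  _ = 1 := Nat.cast_one

lemma walk_color (D : Set ℕ) (hpos : ∀ d ∈ D, 0 < d)
    (C : (distGraph D).Coloring (ZMod 2)) {d : ℕ} (hd : d ∈ D) (x : ℤ) (t : ℕ) :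
    C (x + t * d) = C x + t := by
  induction t with
  | zero => simp
  | succ t ih =>
    have hadj : (distGraph D).Adj (x + t * d + d) (x + t * d) := by
      refine ⟨?_, ?_⟩
      · have := hpos d hd
        intro h
        omega
      · have h : (x + t * d + d) - (x + t * d) = (d : ℤ) := by ring
        rw [h, Int.natAbs_natCast]
        exact hd
    have hne := C.valid hadj
    have h2 : C (x + t * d + d) = C (x + t * d) + 1 := by
      revert hne
      generalize C (x + t * d + d) = a
      generalize C (x + t * d) = b
      revert a b; decide
    have harg : (x + ((t : ℕ) + 1 : ℕ) * (d : ℤ)) = x + t * d + d := by push_cast; ring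
    rw [harg, h2, ih]
    push_cast
    ring

lemma pow_mul_odd_mod_two (a m : ℕ) (hm : Odd m) :
    (2 ^ a * m) % 2 = if a = 0 then 1 else 0 := by
  cases a with
  | zero => simp [Nat.odd_iff.mp hm]
  | succ n =>
    have h : 2 ^ (n + 1) * m = 2 * (2 ^ n * m) := by ring
    simp [h, Nat.mul_mod_right]

/-- For a set `D` of positive integers, `G(ℤ, D)` is bipartite
(admits a proper 2-coloring) iff there is a non-negative integer `k` such that
every element of `D` is `2^k` times an odd integer. -/
theorem distGraph_bipartite_iff (D : Set ℕ) (hpos : ∀ d ∈ D, 0 < d) :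
    (distGraph D).Colorable 2 ↔
      ∃ k : ℕ, ∀ d ∈ D, ∃ m : ℕ, Odd m ∧ d = 2 ^ k * m := by
  constructor
  · rintro ⟨C0⟩
    have C : (distGraph D).Coloring (ZMod 2) := C0
    by_cases hne : ∃ d0, d0 ∈ D
    · obtain ⟨d0, hd0⟩ := hne
      obtain ⟨k, m0, hm0, hd0eq⟩ :=
        Nat.exists_eq_pow_mul_and_not_dvd (hpos d0 hd0).ne' 2 (by norm_num)
      have hm0odd : Odd m0 := Nat.odd_iff.mpr
        ((Nat.mod_two_eq_zero_or_one m0).resolve_left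
          (fun h => hm0 (Nat.dvd_of_mod_eq_zero h)))
      refine ⟨k, fun d hd => ?_⟩
      obtain ⟨j, m, hm, hdeq⟩ :=
        Nat.exists_eq_pow_mul_and_not_dvd (hpos d hd).ne' 2 (by norm_num)
      have hmodd : Odd m := Nat.odd_iff.mpr
        ((Nat.mod_two_eq_zero_or_one m).resolve_left
          (fun h => hm (Nat.dvd_of_mod_eq_zero h)))
      set M := max j k with hM
      have hjM : j ≤ M := le_max_left _ _
      have hkM : k ≤ M := le_max_right _ _
      have e1 : (2 ^ (M - j) * m0) * d = 2 ^ M * (m0 * m) := by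
        rw [hdeq]
        calc (2 ^ (M - j) * m0) * (2 ^ j * m) = 2 ^ (M - j) * 2 ^ j * (m0 * m) := by ring
        _ = 2 ^ M * (m0 * m) := by rw [← pow_add, Nat.sub_add_cancel hjM]
      have e2 : (2 ^ (M - k) * m) * d0 = 2 ^ M * (m0 * m) := by
        rw [hd0eq]
        calc (2 ^ (M - k) * m) * (2 ^ k * m0) = 2 ^ (M - k) * 2 ^ k * (m0 * m) := by ring
        _ = 2 ^ M * (m0 * m) := by rw [← pow_add, Nat.sub_add_cancel hkM]
      have h1 := walk_color D hpos C hd 0 (2 ^ (M - j) * m0)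
      have h2 := walk_color D hpos C hd0 0 (2 ^ (M - k) * m)
      have eZ : ((2 ^ (M - j) * m0) * d : ℕ) = ((2 ^ (M - k) * m) * d0 : ℕ) :=
        e1.trans e2.symm
      have hC : C 0 + ((2 ^ (M - j) * m0 : ℕ) : ZMod 2)
          = C 0 + ((2 ^ (M - k) * m : ℕ) : ZMod 2) := by
        rw [← h1, ← h2]
        congr 1
        simp only [zero_add]
        exact_mod_cast congrArg (fun n : ℕ => (n : ℤ)) eZ
      have hcast : ((2 ^ (M - j) * m0 : ℕ) : ZMod 2) = ((2 ^ (M - k) * m : ℕ) : ZMod 2) :=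
        add_left_cancel hC
      have hmod := (ZMod.natCast_eq_natCast_iff _ _ _).mp hcast
      unfold Nat.ModEq at hmod
      rw [pow_mul_odd_mod_two _ _ hm0odd, pow_mul_odd_mod_two _ _ hmodd] at hmod
      have hchoice : j = M ∨ k = M := by
        rcases max_choice j k with h | h
        · exact Or.inl h.symm
        · exact Or.inr h.symm
      have hjk : j = k := by
        split_ifs at hmod with h1' h2' h2' <;> omega
      exact ⟨m, hmodd, by rw [hdeq, hjk]⟩
    · exact ⟨0, fun d hd => absurd ⟨d, hd⟩ hne⟩
  · rintro ⟨k, hk⟩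
    have hcol : (distGraph D).Coloring (ZMod 2) := SimpleGraph.Coloring.mk
      (fun x => ((x / 2 ^ k : ℤ) : ZMod 2))
      (by
        rintro x y ⟨hne, hd⟩
        obtain ⟨m, hm, hdm⟩ := hk _ hd
        have hpow : (2 : ℤ) ^ k ≠ 0 := by positivity
        rcases Int.natAbs_eq (x - y) with h | h
        · have hx : x = y + (m : ℤ) * 2 ^ k := by
            rw [hdm] at h; push_cast at h; linarith
          simp only [ne_eq]
          rw [hx, Int.add_mul_ediv_right _ _ hpow]
          push_cast
          rw [odd_cast_zmod_two hm]
          intro hcon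
          exact one_ne_zero (add_left_cancel (hcon.trans (add_zero _).symm))
        · have hy : y = x + (m : ℤ) * 2 ^ k := by
            rw [hdm] at h; push_cast at h; linarith
          simp only [ne_eq]
          rw [hy, Int.add_mul_ediv_right _ _ hpow]
          push_cast
          rw [odd_cast_zmod_two hm]
          intro hcon
          exact one_ne_zero (add_left_cancel (hcon.symm.trans (add_zero _).symm)))
    have := hcol.colorable
    rwa [ZMod.card] at this
end

section
/- Let D be a finite nonempty set of positive integers, let q = max(D), and let k be a positive integer with k ≤ q. If the subgraph of G(ℤ, D) induced by the interval of integers [1, q^q + q] admits a proper k-coloring, then χ(D) ≤ k. -/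
/-- Let `D` be a finite nonempty set of positive integers with
maximum `q`, and let `k` be a positive integer with `k ≤ q`. If the subgraph of
`G(ℤ, D)` induced by the integer interval `[1, q^q + q]` has a proper `k`-coloring,
then `χ(D) ≤ k`. -/
theorem distGraph_chromaticNumber_le_of_colorable_interval (D : Set ℕ)
    (hfin : D.Finite) (hne : D.Nonempty) (hpos : ∀ d ∈ D, 0 < d)
    (q : ℕ) (hqmem : q ∈ D) (hqmax : ∀ d ∈ D, d ≤ q)
    (k : ℕ) (hk : 0 < k) (hkq : k ≤ q)
    (hcol : ((distGraph D).induce (Set.Icc (1 : ℤ) ((q : ℤ) ^ q + q))).Colorable k) :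
    (distGraph D).chromaticNumber ≤ k := by
  obtain ⟨C⟩ := hcol
  have hq1 : 1 ≤ q := hpos q hqmem
  have hq1Z : (1 : ℤ) ≤ (q : ℤ) := by exact_mod_cast hq1
  have hQQ : (1 : ℤ) ≤ (q : ℤ) ^ q := one_le_pow₀ hq1Z
  set S : Set ℤ := Set.Icc (1 : ℤ) ((q : ℤ) ^ q + q) with hS
  have h1S : (1 : ℤ) ∈ S := by
    refine ⟨le_refl _, ?_⟩
    linarith
  set c : ℤ → Fin k := fun x => if hx : x ∈ S then C ⟨x, hx⟩ else C ⟨1, h1S⟩ with hc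
  have cprop : ∀ x y : ℤ, x ∈ S → y ∈ S → x ≠ y → (x - y).natAbs ∈ D → c x ≠ c y := by
    intro x y hx hy hne' hmem
    simp only [hc, dif_pos hx, dif_pos hy]
    exact C.valid (⟨hne', hmem⟩ : ((distGraph D).induce S).Adj ⟨x, hx⟩ ⟨y, hy⟩)
  -- main: a repeated window gives a coloring of all of ℤ
  have main : ∀ i j : ℕ, i < j → j ≤ q ^ q →
      (∀ s : ℕ, s < q → c ((i : ℤ) + 1 + s) = c ((j : ℤ) + 1 + s)) →
      (distGraph D).Colorable k := by
    intro i j hij hjq hwin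
    set I : ℤ := (i : ℤ) with hI
    set J : ℤ := (j : ℤ) with hJ
    have hIJ : I < J := by rw [hI, hJ]; exact_mod_cast hij
    have hjqZ : J ≤ (q : ℤ) ^ q := by rw [hJ]; exact_mod_cast hjq
    set P : ℤ := J - I with hPdef
    have hP : 0 < P := by omega
    set h : ℤ → Fin k := fun x => c (I + 1 + (x - I - 1) % P) with hh
    have hmod : ∀ x y : ℤ, (x - y) % P = 0 → h x = h y := by
      intro x y hxy
      obtain ⟨t, ht⟩ := Int.dvd_of_emod_eq_zero hxy
      have h1 : x - I - 1 = (y - I - 1) + P * t := by omega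
      simp only [hh, h1, Int.add_mul_emod_self_left]
    have hJle : ∀ x : ℤ, I + 1 ≤ x → x ≤ J → h x = c x := by
      intro x h1 h2
      have e1 : (x - I - 1) % P = x - I - 1 := Int.emod_eq_of_lt (by omega) (by omega)
      have e2 : I + 1 + (x - I - 1) = x := by ring
      simp only [hh, e1, e2]
    have hwinZ : ∀ x : ℤ, I + 1 ≤ x → x ≤ I + q → c x = c (x + P) := by
      intro x h1 h2
      have hs : (x - I - 1).toNat < q := by omega
      have e1 : x = I + 1 + ((x - I - 1).toNat : ℤ) := by omega
      have e2 : x + P = J + 1 + ((x - I - 1).toNat : ℤ) := by omega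
      have hw := hwin _ hs
      rw [← e1, ← e2] at hw
      exact hw
    have hagree : ∀ n : ℕ, ∀ x : ℤ, I + 1 ≤ x → x ≤ J + q → x ≤ I + 1 + n → h x = c x := by
      intro n
      induction n with
      | zero => intro x h1 h2 h3; exact hJle x h1 (by omega)
      | succ n ih =>
        intro x h1 h2 h3
        by_cases hxJ : x ≤ J
        · exact hJle x h1 hxJ
        · push_neg at hxJ
          have e1 : h x = h (x - P) := (hmod x (x - P) (by
            have : x - (x - P) = P := by ring
            rw [this, Int.emod_self])).symm.symm
          have e2 : h (x - P) = c (x - P) := ih (x - P) (by omega) (by omega) (by omega)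
          have e3 : c (x - P) = c x := by
            have := hwinZ (x - P) (by omega) (by omega)
            rw [this]
            congr 1
            ring
          rw [e1, e2, e3]
    have haux : ∀ x y : ℤ, x < y → (y - x).natAbs ∈ D → h x ≠ h y := by
      intro x y hxy hd
      set d : ℕ := (y - x).natAbs with hdd
      have hdq : d ≤ q := hqmax d hd
      have hdqZ : (d : ℤ) ≤ (q : ℤ) := by exact_mod_cast hdq
      have hd1 : 0 < d := hpos d hd
      set r : ℤ := (x - I - 1) % P with hrdef
      have hr0 : 0 ≤ r := Int.emod_nonneg _ (by omega)
      have hrP : r < P := Int.emod_lt_of_pos _ hP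
      have hrr : (x - (I + 1 + r)) % P = 0 := by
        have e : x - (I + 1 + r) = (x - I - 1) - r := by ring
        rw [e, Int.sub_emod, ← hrdef, Int.emod_eq_of_lt hr0 hrP, sub_self, Int.zero_emod]
      have ex : h x = h (I + 1 + r) := hmod _ _ hrr
      have ey : h y = h (I + 1 + r + d) := by
        apply hmod
        have e : y - (I + 1 + r + (d : ℤ)) = x - (I + 1 + r) := by omega
        rw [e]; exact hrr
      have exc : h (I + 1 + r) = c (I + 1 + r) :=
        hagree (r + (d : ℤ)).toNat _ (by omega) (by omega) (by omega)
      have eyc : h (I + 1 + r + d) = c (I + 1 + r + d) :=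
        hagree (r + (d : ℤ)).toNat _ (by omega) (by omega) (by omega)
      rw [ex, ey, exc, eyc]
      apply cprop
      · exact ⟨by omega, by linarith⟩
      · exact ⟨by omega, by linarith⟩
      · omega
      · have e : (I + 1 + r - (I + 1 + r + (d : ℤ))).natAbs = d := by omega
        rw [e]; exact hd
    refine ⟨SimpleGraph.Coloring.mk h ?_⟩
    rintro x y ⟨hne', hmem⟩
    rcases lt_trichotomy x y with hlt | heq | hgt
    · exact haux x y hlt (by rwa [← neg_sub, Int.natAbs_neg] at hmem)
    · exact absurd heq hne'
    · exact (haux y x hgt hmem).symm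
  -- pigeonhole on windows
  have hineq : Fintype.card (Fin q → Fin k) < Fintype.card (Fin (q ^ q + 1)) := by
    rw [Fintype.card_fun, Fintype.card_fin, Fintype.card_fin, Fintype.card_fin]
    have : k ^ q ≤ q ^ q := Nat.pow_le_pow_left hkq q
    omega
  obtain ⟨a, b, hne', hW⟩ := Fintype.exists_ne_map_eq_of_card_lt
    (fun a : Fin (q ^ q + 1) => fun s : Fin q => c (((a : ℕ) : ℤ) + 1 + ((s : ℕ) : ℤ))) hineq
  have hwin' : ∀ s : ℕ, s < q →
      c (((a : ℕ) : ℤ) + 1 + (s : ℤ)) = c (((b : ℕ) : ℤ) + 1 + (s : ℤ)) := by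
    intro s hs
    exact congrFun hW ⟨s, hs⟩
  have hcolZ : (distGraph D).Colorable k := by
    rcases Nat.lt_or_ge (a : ℕ) (b : ℕ) with hab | hab
    · exact main a b hab (by omega) hwin'
    · have hba : (b : ℕ) < (a : ℕ) := by
        have := Fin.val_ne_of_ne hne'
        omega
      exact main b a hba (by omega) (fun s hs => (hwin' s hs).symm)
  exact hcolZ.chromaticNumber_le
end

section
/- If D is a divisibility chain (a set of positive integers totally ordered by the divisibility relation), then χ(D) ≤ 4. -/
open Set

/-- Finite case: for a finite divisibility chain there is `α ∈ [1/4,3/4]` with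
`fract (d·α) ∈ [1/4,3/4]` for all `d` in the chain. -/
lemma exists_fract_mem_Icc : ∀ (n : ℕ) (S : Finset ℕ), S.card = n →
    (∀ d ∈ S, 0 < d) → (∀ a ∈ S, ∀ b ∈ S, a ∣ b ∨ b ∣ a) →
    ∃ α : ℝ, α ∈ Set.Icc (1/4 : ℝ) (3/4) ∧
      ∀ d ∈ S, Int.fract ((d : ℝ) * α) ∈ Set.Icc (1/4 : ℝ) (3/4) := by
  intro n
  induction n using Nat.strong_induction_on with
  | _ n ih =>
    intro S hcard hpos hchain
    rcases S.eq_empty_or_nonempty with rfl | hne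
    · exact ⟨1/2, by norm_num, by simp⟩
    set m := S.min' hne with hm
    have hmS : m ∈ S := S.min'_mem hne
    have hmpos : 0 < m := hpos m hmS
    have hmdvd : ∀ d ∈ S, m ∣ d := by
      intro d hd
      rcases hchain m hmS d hd with h | h
      · exact h
      · have h1 : m ≤ d := S.min'_le d hd
        have h2 : d ≤ m := Nat.le_of_dvd hmpos h
        have : d = m := le_antisymm h2 h1
        exact this ▸ dvd_rfl
    -- the scaled-down chain
    set S' : Finset ℕ := (S.erase m).image (· / m) with hS'
    have hS'card : S'.card < n := by
      have h1 : S'.card ≤ (S.erase m).card := Finset.card_image_le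
      have h2 : (S.erase m).card < S.card := Finset.card_erase_lt_of_mem hmS
      omega
    have hS'mem : ∀ e ∈ S', ∃ d ∈ S, d ≠ m ∧ d = m * e := by
      intro e he
      rcases Finset.mem_image.mp he with ⟨d, hd, rfl⟩
      have hdS : d ∈ S := Finset.mem_of_mem_erase hd
      have hdm : d ≠ m := Finset.ne_of_mem_erase hd
      exact ⟨d, hdS, hdm, (Nat.mul_div_cancel' (hmdvd d hdS)).symm⟩
    have hS'pos : ∀ e ∈ S', 0 < e := by
      intro e he
      rcases hS'mem e he with ⟨d, hdS, _, hde⟩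
      have := hpos d hdS
      rcases Nat.eq_zero_or_pos e with rfl | h
      · omega
      · exact h
    have hS'chain : ∀ a ∈ S', ∀ b ∈ S', a ∣ b ∨ b ∣ a := by
      intro a ha b hb
      rcases hS'mem a ha with ⟨d1, hd1, _, rfl1⟩
      rcases hS'mem b hb with ⟨d2, hd2, _, rfl2⟩
      rcases hchain d1 hd1 d2 hd2 with h | h
      · left
        rcases h with ⟨c, hc⟩
        exact ⟨c, by rw [rfl1] at hc; exact Nat.eq_of_mul_eq_mul_left hmpos (by
          rw [rfl2] at hc; linarith [hc] <;> omega)⟩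
      · right
        rcases h with ⟨c, hc⟩
        exact ⟨c, by
          rw [rfl1, rfl2, mul_assoc] at hc
          exact Nat.eq_of_mul_eq_mul_left hmpos hc⟩
    obtain ⟨β, hβI, hβ⟩ := ih S'.card hS'card S' rfl hS'pos hS'chain
    -- choose integer shift j
    have hβ0 : (1/4 : ℝ) ≤ β := hβI.1
    have hβ1 : β ≤ 3/4 := hβI.2
    obtain ⟨j, hj1, hj2⟩ : ∃ j : ℤ, (m : ℝ)/4 ≤ β + j ∧ β + j ≤ 3*(m:ℝ)/4 := by
      rcases eq_or_lt_of_le (Nat.one_le_iff_ne_zero.mpr hmpos.ne') with h1 | h2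
      · refine ⟨0, ?_, ?_⟩ <;> simp [← h1] <;> push_cast <;> linarith
      · refine ⟨⌈(m : ℝ)/4 - β⌉, ?_, ?_⟩
        · have := Int.le_ceil ((m : ℝ)/4 - β); linarith
        · have := Int.ceil_lt_add_one ((m : ℝ)/4 - β)
          have hm2 : (2 : ℝ) ≤ m := by exact_mod_cast h2
          linarith
    refine ⟨(β + j) / m, ⟨?_, ?_⟩, ?_⟩
    · rw [le_div_iff₀ (by positivity : (0:ℝ) < m)]; linarith
    · rw [div_le_iff₀ (by positivity : (0:ℝ) < m)]; linarith
    · intro d hd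
      obtain ⟨e, hde⟩ := hmdvd d hd
      have hdα : (d : ℝ) * ((β + j) / m) = e * β + (e * j : ℤ) := by
        have hm0 : (m : ℝ) ≠ 0 := by positivity
        push_cast [hde]
        field_simp
      rw [hdα, Int.fract_add_intCast]
      by_cases hdm : d = m
      · have he1 : e = 1 := by
          have h' : m = m * e := hdm ▸ hde
          exact Nat.eq_of_mul_eq_mul_left hmpos (by rw [mul_one, ← h'])
        rw [he1]
        push_cast
        rw [one_mul, Int.fract_eq_self.mpr ⟨by linarith, by linarith⟩]
        exact ⟨hβ0, hβ1⟩
      · have heS' : e ∈ S' := by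
          apply Finset.mem_image.mpr
          refine ⟨d, Finset.mem_erase.mpr ⟨hdm, hd⟩, ?_⟩
          simp [hde, Nat.mul_div_cancel_left _ hmpos]
        exact hβ e heS'

/-- Infinite case via compactness. -/
lemma exists_fract_mem_Icc_set (D : Set ℕ) (hpos : ∀ d ∈ D, 0 < d)
    (hchain : ∀ a ∈ D, ∀ b ∈ D, a ∣ b ∨ b ∣ a) :
    ∃ α : ℝ, ∀ d ∈ D, Int.fract ((d : ℝ) * α) ∈ Set.Icc (1/4 : ℝ) (3/4) := by
  -- closed condition sets
  set Z : D → Set ℝ := fun d => (fun α : ℝ => |Int.fract ((d : ℕ) * α) - 1/2|) ⁻¹' Set.Iic (1/4) with hZ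
  have hZmem : ∀ (d : D) (α : ℝ),
      α ∈ Z d ↔ Int.fract ((d : ℕ) * α) ∈ Set.Icc (1/4 : ℝ) (3/4) := by
    intro d α
    simp only [hZ, Set.mem_preimage, Set.mem_Iic, Set.mem_Icc, abs_le]
    constructor <;> intro ⟨h1, h2⟩ <;> constructor <;> linarith
  have hZclosed : ∀ d : D, IsClosed (Z d) := by
    intro d
    apply IsClosed.preimage _ isClosed_Iic
    have hcf : Continuous ((fun t : ℝ => |t - 1/2|) ∘ Int.fract) := by
      apply ContinuousOn.comp_fract''
      · exact ((continuous_id.sub continuous_const).abs).continuousOn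
      · norm_num
    exact hcf.comp (continuous_const.mul continuous_id)
  have hK : IsCompact (Set.Icc (1/4 : ℝ) (3/4)) := isCompact_Icc
  by_contra hcon
  push_neg at hcon
  have hempty : (Set.Icc (1/4 : ℝ) (3/4) ∩ ⋂ d : D, Z d) = ∅ := by
    rw [Set.eq_empty_iff_forall_notMem]
    intro α ⟨_, hα⟩
    rw [Set.mem_iInter] at hα
    obtain ⟨d, hd, hdbad⟩ := hcon α
    exact hdbad ((hZmem ⟨d, hd⟩ α).mp (hα ⟨d, hd⟩))
  obtain ⟨t, ht⟩ := hK.elim_finite_subfamily_closed Z hZclosed hempty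
  -- apply the finite lemma to the image of t in ℕ
  set T : Finset ℕ := t.image (fun d : D => (d : ℕ)) with hT
  have hTD : ∀ d ∈ T, d ∈ D := by
    intro d hd
    rcases Finset.mem_image.mp hd with ⟨e, _, rfl⟩
    exact e.2
  obtain ⟨α, hαI, hα⟩ := exists_fract_mem_Icc T.card T rfl
    (fun d hd => hpos d (hTD d hd))
    (fun a ha b hb => hchain a (hTD a ha) b (hTD b hb))
  have : α ∈ Set.Icc (1/4 : ℝ) (3/4) ∩ ⋂ d ∈ t, Z d := by
    refine ⟨hαI, ?_⟩
    rw [Set.mem_iInter₂]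
    intro d hd
    refine (hZmem d α).mpr (hα d ?_)
    exact Finset.mem_image.mpr ⟨d, hd, rfl⟩
  rw [ht] at this
  exact this


/-- If `D` is a divisibility chain (a set of positive integers
totally ordered by divisibility), then `χ(D) ≤ 4`. -/
theorem distGraph_chromaticNumber_le_four_of_divisibility_chain (D : Set ℕ)
    (hpos : ∀ d ∈ D, 0 < d) (hchain : ∀ a ∈ D, ∀ b ∈ D, a ∣ b ∨ b ∣ a) :
    (distGraph D).chromaticNumber ≤ 4 := by
  obtain ⟨α, hα⟩ := exists_fract_mem_Icc_set D hpos hchain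
  have hcol : (distGraph D).Colorable 4 := by
    refine ⟨SimpleGraph.Coloring.mk
      (fun x : ℤ => ⟨(⌊4 * Int.fract ((x : ℝ) * α)⌋).toNat, by
        have h0 : (0:ℝ) ≤ Int.fract ((x : ℝ) * α) := Int.fract_nonneg _
        have h1 : Int.fract ((x : ℝ) * α) < 1 := Int.fract_lt_one _
        have h2 : ⌊4 * Int.fract ((x:ℝ)*α)⌋ < 4 := Int.floor_lt.mpr (by push_cast; linarith)
        omega⟩) ?_⟩
    rintro x y ⟨hxy, hdD⟩ hEq
    have hEq' : (⌊4 * Int.fract ((x : ℝ) * α)⌋).toNat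
        = (⌊4 * Int.fract ((y : ℝ) * α)⌋).toNat := by
      have := congrArg Fin.val hEq
      simpa using this
    set d : ℕ := (x - y).natAbs with hd
    have htI : Int.fract ((d : ℝ) * α) ∈ Set.Icc (1/4 : ℝ) (3/4) := hα d hdD
    set u : ℝ := Int.fract ((x : ℝ) * α) with hu
    set v : ℝ := Int.fract ((y : ℝ) * α) with hv
    set t : ℝ := Int.fract ((d : ℝ) * α) with htdef
    have hu0 : (0:ℝ) ≤ u := Int.fract_nonneg _
    have hv0 : (0:ℝ) ≤ v := Int.fract_nonneg _
    have hfl : ⌊4 * u⌋ = ⌊4 * v⌋ := by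
      have h0u : (0:ℤ) ≤ ⌊4 * u⌋ := Int.floor_nonneg.mpr (by linarith)
      have h0v : (0:ℤ) ≤ ⌊4 * v⌋ := Int.floor_nonneg.mpr (by linarith)
      omega
    have huv1 : -(1/4 : ℝ) < u - v := by
      have h1 := Int.floor_le (4 * u)
      have h4 := Int.lt_floor_add_one (4 * v)
      rw [hfl] at h1
      linarith
    have huv2 : u - v < (1/4 : ℝ) := by
      have h3 := Int.floor_le (4 * v)
      have h2 := Int.lt_floor_add_one (4 * u)
      rw [hfl] at h2
      linarith
    have hufr : u = (x : ℝ) * α - ⌊(x : ℝ) * α⌋ := rfl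
    have hvfr : v = (y : ℝ) * α - ⌊(y : ℝ) * α⌋ := rfl
    have htfr : t = (d : ℝ) * α - ⌊(d : ℝ) * α⌋ := rfl
    rcases Int.natAbs_eq (x - y) with hcase | hcase <;>
      rw [← hd] at hcase
    · -- x - y = d
      have hxyd : (x : ℝ) - (y : ℝ) = (d : ℝ) := by
        exact_mod_cast hcase
      set N : ℤ := ⌊(d : ℝ) * α⌋ - ⌊(x : ℝ) * α⌋ + ⌊(y : ℝ) * α⌋ with hN
      have hNr : (N : ℝ) = u - v - t := by
        rw [hufr, hvfr, htfr]
        push_cast [hN]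
        linear_combination -α * hxyd
      have hN1 : N < 0 := by
        have : (N : ℝ) < 0 := by rw [hNr]; linarith [htI.1]
        exact_mod_cast this
      have hN2 : (-1 : ℤ) < N := by
        have : (-1 : ℝ) < N := by rw [hNr]; linarith [htI.2]
        exact_mod_cast this
      omega
    · -- x - y = -d
      have hxyd : (y : ℝ) - (x : ℝ) = (d : ℝ) := by
        have hx : (x : ℝ) - (y : ℝ) = -(d : ℝ) := by exact_mod_cast hcase
        linarith
      set N : ℤ := ⌊(d : ℝ) * α⌋ - ⌊(y : ℝ) * α⌋ + ⌊(x : ℝ) * α⌋ with hN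
      have hNr : (N : ℝ) = v - u - t := by
        rw [hufr, hvfr, htfr]
        push_cast [hN]
        linear_combination -α * hxyd
      have hN1 : N < 0 := by
        have : (N : ℝ) < 0 := by rw [hNr]; linarith [htI.1]
        exact_mod_cast this
      have hN2 : (-1 : ℤ) < N := by
        have : (-1 : ℝ) < N := by rw [hNr]; linarith [htI.2]
        exact_mod_cast this
      omega
  exact hcol.chromaticNumber_le
end

section
/- Let D be a divisibility chain (a set of positive integers totally ordered by the divisibility relation). If no element a of D satisfies 2a ∈ D (equivalently, no ratio between consecutive elements of D equals 2), then χ(D) ≤ 3. -/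
lemma key_aux (D : Set ℕ) (hpos : ∀ d ∈ D, 0 < d)
    (hchain : ∀ a ∈ D, ∀ b ∈ D, a ∣ b ∨ b ∣ a)
    (hno2 : ∀ a ∈ D, 2 * a ∉ D) :
    ∀ (N : ℕ) (D' : Finset ℕ), D'.card ≤ N → (∀ d ∈ D', d ∈ D) →
    ∀ m ∈ D', (∀ d ∈ D', d ≤ m) →
    ∃ n : ℤ, Odd n ∧ ∀ d ∈ D', ∃ c : ℤ,
      |(d : ℚ) * n / (2 * m) - (c + 1/2)| ≤ 1/6 - d / (6 * m) := by
  intro N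
  induction N with
  | zero =>
    intro D' hcard _ m hm _
    exact absurd (Finset.card_pos.mpr ⟨m, hm⟩) (by omega)
  | succ N ih =>
    intro D' hcard hsub m hm hmax
    have hmD : m ∈ D := hsub m hm
    have hmpos : 0 < m := hpos m hmD
    have hmQ : (0:ℚ) < (m:ℚ) := by exact_mod_cast hmpos
    have hd0 : (m:ℚ) ≠ 0 := ne_of_gt hmQ
    by_cases hE : (D'.erase m) = ∅
    · -- D' = {m}
      refine ⟨1, odd_one, ?_⟩
      intro d hd
      have hdm : d = m := by
        by_contra h
        exact absurd (Finset.mem_erase.mpr ⟨h, hd⟩) (by simp [hE])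
      subst hdm
      refine ⟨0, ?_⟩
      have h1 : (d:ℚ) * ((1:ℤ):ℚ) / (2 * d) - (((0:ℤ):ℚ) + 1/2) = 0 := by
        push_cast
        field_simp
        ring
      have h2 : 1/6 - (d:ℚ) / (6 * d) = 0 := by
        field_simp
        ring
      rw [h1, h2]
      simp
    · -- inductive step
      have hne : (D'.erase m).Nonempty := Finset.nonempty_of_ne_empty hE
      set m' := (D'.erase m).max' hne with hm'def
      have hm'mem : m' ∈ D'.erase m := Finset.max'_mem _ hne
      have hm'D' : m' ∈ D' := (Finset.mem_erase.mp hm'mem).2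
      have hm'ne : m' ≠ m := (Finset.mem_erase.mp hm'mem).1
      have hm'D : m' ∈ D := hsub m' hm'D'
      have hm'pos : 0 < m' := hpos m' hm'D
      have hm'lt : m' < m := lt_of_le_of_ne (hmax m' hm'D') hm'ne
      have hdvd : m' ∣ m := by
        rcases hchain m' hm'D m hmD with h | h
        · exact h
        · exact absurd (Nat.le_of_dvd hm'pos h) (by omega)
      obtain ⟨q, hq⟩ := hdvd
      have hq2 : 2 ≤ q := by nlinarith
      have hqne2 : q ≠ 2 := by
        intro h
        subst h
        have h2m : 2 * m' = m := by omega
        exact hno2 m' hm'D (h2m ▸ hmD)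
      have hq3 : 3 ≤ q := by omega
      have hcard' : (D'.erase m).card ≤ N := by
        have := Finset.card_erase_of_mem hm
        have := Finset.card_pos.mpr ⟨m, hm⟩
        omega
      obtain ⟨n', hodd', hn'⟩ := ih (D'.erase m) hcard'
        (fun d hd => hsub d (Finset.mem_erase.mp hd).2) m' hm'mem
        (fun d hd => Finset.le_max' _ d hd)
      have hm'Q : (0:ℚ) < (m':ℚ) := by exact_mod_cast hm'pos
      have hm'0 : (m':ℚ) ≠ 0 := ne_of_gt hm'Q
      have hmm' : (m:ℚ) = (q:ℚ) * (m':ℚ) := by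
        rw [hq]; push_cast; ring
      have hqQ : (0:ℚ) < (q:ℚ) := by exact_mod_cast (by omega : 0 < q)
      have hq0 : (q:ℚ) ≠ 0 := ne_of_gt hqQ
      by_cases hqodd : Odd q
      · -- q odd : t = (q n')/(2m) = n'/(2m')
        have hoddqn : Odd ((q:ℤ) * n') :=
          ((Int.odd_coe_nat q).mpr hqodd).mul hodd'
        refine ⟨(q:ℤ) * n', hoddqn, ?_⟩
        intro d hd
        by_cases hdm : d = m
        · subst hdm
          obtain ⟨b, hb⟩ := hoddqn
          refine ⟨b, ?_⟩
          have hqn : (q:ℚ) * (n':ℚ) = 2 * (b:ℚ) + 1 := by exact_mod_cast hb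
          have h1 : (d:ℚ) * (((q:ℤ) * n' : ℤ):ℚ) / (2 * d) - ((b:ℚ) + 1/2) = 0 := by
            push_cast
            rw [hqn]
            field_simp
            ring
          have h2 : 1/6 - (d:ℚ) / (6 * d) = 0 := by field_simp; ring
          rw [h1, h2]
          simp
        · have hdE : d ∈ D'.erase m := Finset.mem_erase.mpr ⟨hdm, hd⟩
          obtain ⟨c, hc⟩ := hn' d hdE
          refine ⟨c, ?_⟩
          have heq : (d:ℚ) * (((q:ℤ) * n' : ℤ):ℚ) / (2 * m) = (d:ℚ) * n' / (2 * m') := by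
            push_cast
            rw [hmm']
            field_simp
          rw [heq]
          refine le_trans hc ?_
          have hdpos : (0:ℚ) < d := by exact_mod_cast hpos d (hsub d hd)
          have hle : (d:ℚ) / (6 * m) ≤ (d:ℚ) / (6 * m') := by
            apply div_le_div_of_nonneg_left (le_of_lt hdpos) (by positivity)
            have : (m':ℚ) ≤ m := by exact_mod_cast le_of_lt hm'lt
            linarith
          linarith
      · -- q even, so q ≥ 4 : t = (q n' + 1)/(2m)
        have hqeven : Even q := Nat.not_odd_iff_even.mp hqodd
        have hq4 : 4 ≤ q := by
          obtain ⟨k, hk⟩ := hqeven; omega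
        have hevqn : Even ((q:ℤ) * n') :=
          ((Int.even_coe_nat q).mpr hqeven).mul_right n'
        have hoddn : Odd ((q:ℤ) * n' + 1) := Even.add_one hevqn
        refine ⟨(q:ℤ) * n' + 1, hoddn, ?_⟩
        intro d hd
        by_cases hdm : d = m
        · subst hdm
          obtain ⟨k, hk⟩ := hevqn
          refine ⟨k, ?_⟩
          have hqn : (q:ℚ) * (n':ℚ) = (k:ℚ) + k := by exact_mod_cast hk
          have h1 : (d:ℚ) * (((q:ℤ) * n' + 1 : ℤ):ℚ) / (2 * d) - ((k:ℚ) + 1/2) = 0 := by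
            push_cast
            rw [hqn]
            field_simp
            ring
          have h2 : 1/6 - (d:ℚ) / (6 * d) = 0 := by field_simp; ring
          rw [h1, h2]
          simp
        · have hdE : d ∈ D'.erase m := Finset.mem_erase.mpr ⟨hdm, hd⟩
          obtain ⟨c, hc⟩ := hn' d hdE
          refine ⟨c, ?_⟩
          have hdpos : (0:ℚ) < d := by exact_mod_cast hpos d (hsub d hd)
          have heq : (d:ℚ) * (((q:ℤ) * n' + 1 : ℤ):ℚ) / (2 * m)
              = (d:ℚ) * n' / (2 * m') + (d:ℚ) / (2 * m) := by
            push_cast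
            rw [hmm']
            field_simp
          rw [heq]
          have habs2 : |(d:ℚ) / (2 * m)| = (d:ℚ) / (2 * m) := by
            rw [abs_of_nonneg]; positivity
          have habs : |(d:ℚ) * n' / (2 * m') + (d:ℚ) / (2 * m) - ((c:ℚ) + 1/2)|
              ≤ |(d:ℚ) * n' / (2 * m') - ((c:ℚ) + 1/2)| + (d:ℚ) / (2 * m) := by
            calc |(d:ℚ) * n' / (2 * m') + (d:ℚ) / (2 * m) - ((c:ℚ) + 1/2)|
                = |((d:ℚ) * n' / (2 * m') - ((c:ℚ) + 1/2)) + (d:ℚ) / (2 * m)| := by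
                  ring_nf
              _ ≤ |(d:ℚ) * n' / (2 * m') - ((c:ℚ) + 1/2)| + |(d:ℚ) / (2 * m)| :=
                  abs_add_le _ _
              _ = _ := by rw [habs2]
          refine le_trans habs ?_
          have hkey : (d:ℚ) / (2 * m) + (d:ℚ) / (6 * m) ≤ (d:ℚ) / (6 * m') := by
            rw [hmm']
            rw [div_add_div _ _ (by positivity) (by positivity),
              div_le_div_iff₀ (by positivity) (by positivity)]
            have h4 : (4:ℚ) ≤ (q:ℚ) := by exact_mod_cast hq4
            nlinarith [mul_nonneg (mul_nonneg (mul_nonneg hdpos.le hqQ.le)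
              (mul_pos hm'Q hm'Q).le) (by linarith : (0:ℚ) ≤ (q:ℚ) - 4)]
          linarith


lemma floor_three_fract_ne (t : ℚ) (x y : ℤ) (c : ℤ)
    (hc : |((x - y : ℤ) : ℚ) * t - ((c : ℚ) + 1/2)| ≤ 1/6) :
    ⌊3 * Int.fract ((x : ℚ) * t)⌋ ≠ ⌊3 * Int.fract ((y : ℚ) * t)⌋ := by
  intro heq
  set u := Int.fract ((x : ℚ) * t) with hu
  set v := Int.fract ((y : ℚ) * t) with hv
  have h1 : (⌊3 * u⌋ : ℚ) ≤ 3 * u := Int.floor_le _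
  have h2 : 3 * u < ⌊3 * u⌋ + 1 := Int.lt_floor_add_one _
  have h3 : (⌊3 * v⌋ : ℚ) ≤ 3 * v := Int.floor_le _
  have h4 : 3 * v < ⌊3 * v⌋ + 1 := Int.lt_floor_add_one _
  have heqQ : ((⌊3 * u⌋ : ℚ)) = ((⌊3 * v⌋ : ℚ)) := by exact_mod_cast heq
  have huv : |u - v| < 1/3 := by
    rw [abs_lt]; constructor <;> nlinarith
  have hux : u = (x : ℚ) * t - ⌊(x : ℚ) * t⌋ := (Int.self_sub_floor _).symm
  have hvy : v = (y : ℚ) * t - ⌊(y : ℚ) * t⌋ := (Int.self_sub_floor _).symm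
  set j : ℤ := c - (⌊(x : ℚ) * t⌋ - ⌊(y : ℚ) * t⌋) with hj
  have hkey : |u - v - ((j : ℚ) + 1/2)| ≤ 1/6 := by
    have : u - v - ((j : ℚ) + 1/2) = ((x - y : ℤ) : ℚ) * t - ((c : ℚ) + 1/2) := by
      rw [hux, hvy, hj]
      push_cast
      ring
    rw [this]; exact hc
  have hjb : |(j : ℚ) + 1/2| < 1/2 := by
    have := abs_sub_abs_le_abs_sub (u - v) (u - v - ((j : ℚ) + 1/2))
    have h5 : |(j : ℚ) + 1/2| = |(u - v) - (u - v - ((j : ℚ) + 1/2))| := by ring_nf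
    rw [h5]
    calc |(u - v) - (u - v - ((j : ℚ) + 1/2))| ≤ |u - v| + |u - v - ((j : ℚ) + 1/2)| :=
          abs_sub _ _
      _ < 1/3 + 1/6 := by linarith [hkey]
      _ = 1/2 := by norm_num
  rw [abs_lt] at hjb
  have hjlt : (j : ℚ) < 0 := by linarith
  have hjgt : (-1 : ℚ) < j := by linarith
  have : j < 0 := by exact_mod_cast hjlt
  have : (-1 : ℤ) < j := by exact_mod_cast hjgt
  omega

/-- The level-`t` coloring of `ℤ` with three colors. -/
noncomputable def threeColor (t : ℚ) (x : ℤ) : Fin 3 :=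
  ⟨(⌊3 * Int.fract ((x : ℚ) * t)⌋).toNat % 3, Nat.mod_lt _ (by norm_num)⟩

lemma threeColor_ne (t : ℚ) (x y : ℤ) (c : ℤ)
    (hc : |((x - y : ℤ) : ℚ) * t - ((c : ℚ) + 1/2)| ≤ 1/6) :
    threeColor t x ≠ threeColor t y := by
  intro h
  apply floor_three_fract_ne t x y c hc
  have hx0 : 0 ≤ ⌊3 * Int.fract ((x : ℚ) * t)⌋ :=
    Int.floor_nonneg.mpr (by have := Int.fract_nonneg ((x : ℚ) * t); linarith)
  have hy0 : 0 ≤ ⌊3 * Int.fract ((y : ℚ) * t)⌋ :=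
    Int.floor_nonneg.mpr (by have := Int.fract_nonneg ((y : ℚ) * t); linarith)
  have hx3 : ⌊3 * Int.fract ((x : ℚ) * t)⌋ < 3 := by
    apply Int.floor_lt.mpr
    have := Int.fract_lt_one ((x : ℚ) * t)
    push_cast
    linarith
  have hy3 : ⌊3 * Int.fract ((y : ℚ) * t)⌋ < 3 := by
    apply Int.floor_lt.mpr
    have := Int.fract_lt_one ((y : ℚ) * t)
    push_cast
    linarith
  have := congrArg Fin.val h
  simp only [threeColor] at this
  omega

/-- If `D` is a divisibility chain such that no element `a ∈ D`
satisfies `2a ∈ D`, then `χ(D) ≤ 3`. -/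
theorem distGraph_chromaticNumber_le_three_of_divisibility_chain (D : Set ℕ)
    (hpos : ∀ d ∈ D, 0 < d) (hchain : ∀ a ∈ D, ∀ b ∈ D, a ∣ b ∨ b ∣ a)
    (hno2 : ∀ a ∈ D, 2 * a ∉ D) :
    (distGraph D).chromaticNumber ≤ 3 := by
  classical
  have hhom : Nonempty (distGraph D →g (⊤ : SimpleGraph (Fin 3))) := by
    apply SimpleGraph.nonempty_hom_of_forall_finite_subgraph_hom
    intro G' hfin
    refine Nonempty.some ?_
    set S : Finset ℤ := hfin.toFinset with hS
    set Nb : ℕ := S.sup (fun x => x.natAbs) with hNb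
    set D' : Finset ℕ := (Finset.range (2 * Nb + 1)).filter (· ∈ D) with hD'
    have hmemD' : ∀ {a b : ℤ}, a ∈ G'.verts → b ∈ G'.verts →
        (a - b).natAbs ∈ D → (a - b).natAbs ∈ D' := by
      intro a b ha hb hD
      have haS : a ∈ S := hfin.mem_toFinset.mpr ha
      have hbS : b ∈ S := hfin.mem_toFinset.mpr hb
      have h1 : a.natAbs ≤ Nb := Finset.le_sup (f := fun x : ℤ => x.natAbs) haS
      have h2 : b.natAbs ≤ Nb := Finset.le_sup (f := fun x : ℤ => x.natAbs) hbS
      have h3 : (a - b).natAbs ≤ a.natAbs + b.natAbs := Int.natAbs_sub_le a b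
      exact Finset.mem_filter.mpr ⟨Finset.mem_range.mpr (by omega), hD⟩
    by_cases hne : D'.Nonempty
    · set m : ℕ := D'.max' hne with hm
      obtain ⟨n, -, hn⟩ := key_aux D hpos hchain hno2 D'.card D' le_rfl
        (fun d hd => (Finset.mem_filter.mp hd).2) m (D'.max'_mem hne)
        (fun d hd => D'.le_max' d hd)
      set t : ℚ := (n : ℚ) / (2 * m) with ht
      refine ⟨fun v => threeColor t v.val, ?_⟩
      intro a b hab
      rw [SimpleGraph.Subgraph.coe_adj] at hab
      have hadj : (distGraph D).Adj a.val b.val := G'.adj_sub hab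
      obtain ⟨hxy, hmem⟩ := hadj
      set d : ℕ := ((a.val : ℤ) - b.val).natAbs with hd
      have hdD' : d ∈ D' := hmemD' (G'.edge_vert hab) (G'.edge_vert hab.symm) hmem
      obtain ⟨c, hc⟩ := hn d hdD'
      have hc' : |(d : ℚ) * t - ((c : ℚ) + 1/2)| ≤ 1/6 := by
        have hdle : (d : ℚ) / (6 * m) ≥ 0 := by positivity
        have heq2 : (d : ℚ) * t = (d : ℚ) * n / (2 * m) := by
          rw [ht]; ring
        rw [heq2]
        linarith
      have hne3 : threeColor t a.val ≠ threeColor t b.val := by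
        rcases Int.natAbs_eq ((a.val : ℤ) - b.val) with h | h
        · apply threeColor_ne t a.val b.val c
          rw [← hd] at h
          have he0 : ((a.val - b.val : ℤ) : ℚ) = (d : ℚ) := by
            rw [h]; push_cast; ring
          rw [he0]
          exact hc'
        · apply threeColor_ne t a.val b.val (-c - 1)
          rw [← hd] at h
          have he1 : ((a.val - b.val : ℤ) : ℚ) * t = -((d : ℚ) * t) := by
            rw [h]; push_cast; ring
          rw [he1]
          have he2 : |-((d:ℚ) * t) - (((-c - 1 : ℤ) : ℚ) + 1/2)|
              = |(d : ℚ) * t - ((c : ℚ) + 1/2)| := by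
            rw [← abs_neg]; congr 1; push_cast; ring
          rw [he2]; exact hc'
      simpa using hne3
    · refine ⟨fun _ => 0, ?_⟩
      intro a b hab
      rw [SimpleGraph.Subgraph.coe_adj] at hab
      have hadj : (distGraph D).Adj a.val b.val := G'.adj_sub hab
      obtain ⟨hxy, hmem⟩ := hadj
      have : ((a.val : ℤ) - b.val).natAbs ∈ D' :=
        hmemD' (G'.edge_vert hab) (G'.edge_vert hab.symm) hmem
      exact absurd ⟨_, this⟩ hne
  have hcol : (distGraph D).Colorable 3 := hhom.elim fun f => ⟨f⟩
  have := hcol.chromaticNumber_le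
  exact_mod_cast this
end

section
/- Let D be a divisibility chain (a set of positive integers totally ordered by the divisibility relation). Then χ(D) ≤ 3 if and only if there do not exist elements a, b, b' of D such that 2a ∈ D, 2a divides b, and 3b divides b'. (Writing D = {d₁, d₂, d₃, …} with d₁ | d₂ | d₃ | ⋯ and ratios rᵢ = d_{i+1}/dᵢ, this condition says there do not exist indices i < j with rᵢ = 2 and 3 | r_j.) -/
lemma distGraph_adj (D : Set ℕ) {d : ℕ} (hd : d ∈ D) (hd0 : d ≠ 0) {x y : ℤ}
    (hxy : y - x = (d : ℤ)) : (distGraph D).Adj x y := by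
  constructor
  · intro h
    rw [h, sub_self] at hxy
    exact hd0 (by exact_mod_cast hxy.symm)
  · have : x - y = -(d : ℤ) := by linarith
    rw [this, Int.natAbs_neg, Int.natAbs_natCast]
    exact hd

lemma fin3_pigeonhole : ∀ u v w t : Fin 3,
    u ≠ v → u ≠ w → v ≠ w → v ≠ t → w ≠ t → t = u := by
  intro u v w t h1 h2 h3 h4 h5
  fin_cases u <;> fin_cases v <;> fin_cases w <;> fin_cases t <;> simp_all

/-- Forward direction: the pattern forces the chromatic number above 3. -/
lemma not_colorable_of_pattern (D : Set ℕ) (hpos : ∀ d ∈ D, 0 < d)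
    (h : ∃ a ∈ D, ∃ b ∈ D, ∃ b' ∈ D, 2 * a ∈ D ∧ 2 * a ∣ b ∧ 3 * b ∣ b') :
    ¬ (distGraph D).Colorable 3 := by
  obtain ⟨a, ha, b, hb, b', hb', h2a, hab, hbb⟩ := h
  rintro ⟨C⟩
  have ha0 : a ≠ 0 := (hpos a ha).ne'
  have h2a0 : 2 * a ≠ 0 := by omega
  have hb'0 : b' ≠ 0 := (hpos b' hb').ne'
  have h3ab' : 3 * a ∣ b' := by
    obtain ⟨k, hk⟩ := hab
    obtain ⟨l, hl⟩ := hbb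
    exact ⟨2 * k * l, by rw [hl, hk]; ring⟩
  obtain ⟨k, hk⟩ := h3ab'
  have per : ∀ x : ℤ, C (x + 3 * (a : ℤ)) = C x := by
    intro x
    have e1 : C x ≠ C (x + (a : ℤ)) :=
      C.valid (distGraph_adj D ha ha0 (by ring))
    have e2 : C x ≠ C (x + 2 * (a : ℤ)) :=
      C.valid (distGraph_adj D h2a h2a0 (by push_cast; ring))
    have e3 : C (x + (a : ℤ)) ≠ C (x + 2 * (a : ℤ)) :=
      C.valid (distGraph_adj D ha ha0 (by push_cast; ring))
    have e4 : C (x + (a : ℤ)) ≠ C (x + 3 * (a : ℤ)) :=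
      C.valid (distGraph_adj D h2a h2a0 (by push_cast; ring))
    have e5 : C (x + 2 * (a : ℤ)) ≠ C (x + 3 * (a : ℤ)) :=
      C.valid (distGraph_adj D ha ha0 (by push_cast; ring))
    exact fin3_pigeonhole _ _ _ _ e1 e2 e3 e4 e5
  have per2 : ∀ (n : ℕ) (x : ℤ), C (x + 3 * (a : ℤ) * n) = C x := by
    intro n
    induction n with
    | zero => intro x; simp
    | succ n ih =>
      intro x
      have e : x + 3 * (a : ℤ) * (n + 1 : ℕ) = (x + 3 * (a : ℤ)) + 3 * (a : ℤ) * n := by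
        push_cast; ring
      rw [e, ih, per]
  have hadj : (distGraph D).Adj 0 (b' : ℤ) :=
    distGraph_adj D hb' hb'0 (by ring)
  apply C.valid hadj
  have := per2 k 0
  have e : (0 : ℤ) + 3 * (a : ℤ) * k = (b' : ℤ) := by
    have : (b' : ℤ) = ((3 * a * k : ℕ) : ℤ) := by exact_mod_cast hk
    rw [this]; push_cast; ring
  rw [e] at this
  exact this.symm

/-- Backward lifting along a finite divisor chain with all ratios ≥ 3. -/
lemma low_chain (m : ℕ) (hm : 0 < m) :
    ∀ (n : ℕ) (L : Finset ℕ), L.card ≤ n → m ∈ L →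
      (∀ d ∈ L, 0 < d ∧ d ∣ m) →
      (∀ a ∈ L, ∀ b ∈ L, a ∣ b ∨ b ∣ a) →
      (∀ a ∈ L, 2 * a ∉ L) →
      ∃ s : ℕ, ∀ d ∈ L, m / d ≤ s % (3 * (m / d)) ∧ s % (3 * (m / d)) < 2 * (m / d) := by
  intro n
  induction n with
  | zero =>
    intro L hcard hmem _ _ _
    have := Finset.card_pos.mpr ⟨m, hmem⟩
    omega
  | succ n ih =>
    intro L hcard hmem hdvd hch hnd
    by_cases hone : L.card ≤ 1
    · have hLm : L = {m} := by
        apply Finset.eq_singleton_iff_unique_mem.mpr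
        exact ⟨hmem, fun x hx => Finset.card_le_one.mp hone x hx m hmem⟩
      refine ⟨1, ?_⟩
      intro d hd
      rw [hLm, Finset.mem_singleton] at hd
      subst hd
      rw [Nat.div_self hm]
      norm_num
    · have hLne : L.Nonempty := ⟨m, hmem⟩
      set a := L.min' hLne with ha
      have haL : a ∈ L := L.min'_mem hLne
      have ha0 : 0 < a := (hdvd a haL).1
      have ham : a ≠ m := by
        intro h
        have hall : ∀ d ∈ L, d = m := by
          intro d hd
          have h1 : a ≤ d := L.min'_le d hd
          have h2 : d ≤ m := Nat.le_of_dvd hm (hdvd d hd).2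
          omega
        have hsub : L ⊆ {m} := fun d hd => Finset.mem_singleton.mpr (hall d hd)
        have := Finset.card_le_card hsub
        simp at this
        omega
      set L' := L.erase a with hL'
      have hmem' : m ∈ L' := Finset.mem_erase.mpr ⟨Ne.symm ham, hmem⟩
      have hcard' : L'.card ≤ n := by
        rw [hL', Finset.card_erase_of_mem haL]; omega
      obtain ⟨s', hs'⟩ := ih L' hcard' hmem'
        (fun d hd => hdvd d (Finset.mem_of_mem_erase hd))
        (fun x hx y hy => hch x (Finset.mem_of_mem_erase hx) y (Finset.mem_of_mem_erase hy))
        (fun x hx h2x => hnd x (Finset.mem_of_mem_erase hx) (Finset.mem_of_mem_erase h2x))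
      have hL'ne : L'.Nonempty := ⟨m, hmem'⟩
      set b := L'.min' hL'ne with hbdef
      have hbL' : b ∈ L' := L'.min'_mem hL'ne
      have hbL : b ∈ L := Finset.mem_of_mem_erase hbL'
      have hba : b ≠ a := (Finset.mem_erase.mp hbL').1
      have hb0 : 0 < b := (hdvd b hbL).1
      have hab : a ∣ b := by
        rcases hch a haL b hbL with h | h
        · exact h
        · have h1 : a ≤ b := L.min'_le b hbL
          have h2 : b ≤ a := Nat.le_of_dvd ha0 h
          omega
      have haltb : a < b := lt_of_le_of_ne (L.min'_le b hbL) (Ne.symm hba)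
      obtain ⟨q, hqb⟩ := hab
      have hq3 : 3 ≤ q := by
        have h0 : q ≠ 0 := by rintro rfl; omega
        have h1 : q ≠ 1 := by rintro rfl; omega
        have h2 : q ≠ 2 := by
          rintro rfl
          exact hnd a haL (by rw [show 2 * a = b by omega]; exact hbL)
        omega
      have ham' : a ∣ m := (hdvd a haL).2
      have hbm : b ∣ m := (hdvd b hbL).2
      obtain ⟨B, hBb⟩ := hbm
      have hmb : m / b = B := by rw [hBb]; exact Nat.mul_div_cancel_left B hb0
      have hB0 : 0 < B := by
        have : B ≠ 0 := by rintro rfl; rw [Nat.mul_zero] at hBb; omega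
        omega
      have hAa : m = a * (q * B) := by rw [hBb, hqb]; ring
      have hma : m / a = q * B := by rw [hAa]; exact Nat.mul_div_cancel_left _ ha0
      have h3BA : 3 * B ≤ q * B := Nat.mul_le_mul_right B hq3
      obtain ⟨hs1, hs2⟩ := hs' b hbL'
      rw [hmb] at hs1 hs2
      set σ := s' % (3 * B) with hσdef
      have hσA : σ < q * B := by omega
      set t := q * B - σ with ht
      obtain ⟨P, hPdvd, hPeq⟩ : ∃ P, (3 * B) ∣ P ∧ P + (t + 3 * B - 1) % (3 * B) = t + 3 * B - 1 :=
        ⟨(3 * B) * ((t + 3 * B - 1) / (3 * B)), Dvd.intro _ rfl, Nat.div_add_mod _ _⟩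
      have hmlt : (t + 3 * B - 1) % (3 * B) < 3 * B := Nat.mod_lt _ (by omega)
      have hP1 : t ≤ P := by omega
      have hP2 : P ≤ t + 3 * B - 1 := by omega
      set s := σ + P with hs
      have hsA : q * B ≤ s ∧ s < q * B + 3 * B := by omega
      refine ⟨s, ?_⟩
      intro d hd
      by_cases hda : d = a
      · subst hda
        rw [hma]
        have hslt : s < 3 * (q * B) := by omega
        rw [Nat.mod_eq_of_lt hslt]
        omega
      · have hdL' : d ∈ L' := Finset.mem_erase.mpr ⟨hda, hd⟩
        obtain ⟨hd1, hd2⟩ := hs' d hdL'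
        have hbd : b ∣ d := by
          rcases hch b hbL d hd with h | h
          · exact h
          · have h1 : b ≤ d := L'.min'_le d hdL'
            have h2 : d ≤ b := Nat.le_of_dvd hb0 h
            have : d = b := by omega
            rw [this]
        have hdm' : d ∣ m := (hdvd d hd).2
        have hd0 : 0 < d := (hdvd d hd).1
        obtain ⟨c, hc⟩ := hdm'
        have hmd : m / d = c := by rw [hc]; exact Nat.mul_div_cancel_left c hd0
        rw [hmd] at hd1 hd2 ⊢
        obtain ⟨g, hg⟩ := hbd
        have hBgc : B = g * c := by
          apply Nat.eq_of_mul_eq_mul_left hb0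
          calc b * B = m := hBb.symm
            _ = d * c := hc
            _ = b * (g * c) := by rw [hg]; ring
        have hcB : c ∣ B := ⟨g, by rw [hBgc]; ring⟩
        have hmodeq : s % (3 * c) = s' % (3 * c) := by
          have hdvd3 : 3 * c ∣ 3 * B := mul_dvd_mul_left 3 hcB
          have e1 : σ ≡ s [MOD 3 * B] := by
            apply (Nat.modEq_iff_dvd' (by omega)).mpr
            have hsP : s - σ = P := by omega
            rw [hsP]
            exact hPdvd
          have e2 : σ ≡ s' [MOD 3 * B] := Nat.mod_modEq s' (3 * B)
          exact ((e1.symm.trans e2).of_dvd hdvd3)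
        rw [hmodeq]
        exact ⟨hd1, hd2⟩

/-- Evaluation: the per-divisor residue condition transfers to `s*d mod 3m`. -/
lemma low_eval (m s d : ℕ) (hd0 : 0 < d) (hdm : d ∣ m)
    (h1 : m / d ≤ s % (3 * (m / d))) (h2 : s % (3 * (m / d)) < 2 * (m / d)) :
    m ≤ s * d % (3 * m) ∧ s * d % (3 * m) ≤ 2 * m := by
  obtain ⟨c, hc⟩ := hdm
  have hcd : m / d = c := by rw [hc]; exact Nat.mul_div_cancel_left c hd0
  rw [hcd] at h1 h2
  have hdm3 := Nat.div_add_mod s (3 * c)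
  set Q := s / (3 * c) with hQ
  set r := s % (3 * c) with hr
  have key : s * d % (3 * m) = r * d := by
    have e1 : s * d = 3 * m * Q + r * d := by
      rw [← hdm3, hc]; ring
    rw [e1, Nat.mul_add_mod]
    apply Nat.mod_eq_of_lt
    calc r * d < (3 * c) * d := by
          exact mul_lt_mul_of_pos_right (Nat.mod_lt s (by omega)) hd0
      _ = 3 * m := by rw [hc]; ring
  rw [key]
  constructor
  · calc m = c * d := by rw [hc]; ring
      _ ≤ r * d := mul_le_mul_left h1 d
  · calc r * d ≤ (2 * c) * d := mul_le_mul_left (le_of_lt h2) d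
      _ = 2 * m := by rw [hc]; ring

/-- Finite construction: for a finite pattern-free chain, good `m, s` exist. -/
lemma exists_good_mod (E : Finset ℕ) (hpos : ∀ d ∈ E, 0 < d)
    (hch : ∀ a ∈ E, ∀ b ∈ E, a ∣ b ∨ b ∣ a)
    (hnp : ¬ ∃ a ∈ E, ∃ b ∈ E, ∃ b' ∈ E, 2 * a ∈ E ∧ 2 * a ∣ b ∧ 3 * b ∣ b') :
    ∃ m s : ℕ, 0 < m ∧ ∀ d ∈ E, m ≤ s * d % (3 * m) ∧ s * d % (3 * m) ≤ 2 * m := by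
  classical
  rcases E.eq_empty_or_nonempty with rfl | hne
  · exact ⟨1, 0, one_pos, by simp⟩
  by_cases hA : ∃ a ∈ E, 2 * a ∈ E
  · -- Case A : there is a ratio-2 step; anchor at the least such element
    set S := E.filter (fun a => 2 * a ∈ E) with hS
    have hSne : S.Nonempty := by
      obtain ⟨a, haE, ha2⟩ := hA
      exact ⟨a, Finset.mem_filter.mpr ⟨haE, ha2⟩⟩
    set m := S.min' hSne with hmdef
    have hmS : m ∈ S := S.min'_mem hSne
    have hmE : m ∈ E := (Finset.mem_filter.mp hmS).1
    have h2mE : 2 * m ∈ E := (Finset.mem_filter.mp hmS).2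
    have hm0 : 0 < m := hpos m hmE
    set L := E.filter (· ∣ m) with hL
    have hmemL : m ∈ L := Finset.mem_filter.mpr ⟨hmE, dvd_rfl⟩
    have hndL : ∀ x ∈ L, 2 * x ∉ L := by
      intro x hxL h2xL
      have hxE : x ∈ E := (Finset.mem_filter.mp hxL).1
      have h2xE : 2 * x ∈ E := (Finset.mem_filter.mp h2xL).1
      have hxS : x ∈ S := Finset.mem_filter.mpr ⟨hxE, h2xE⟩
      have hmx : m ≤ x := S.min'_le x hxS
      have h2xm : 2 * x ∣ m := (Finset.mem_filter.mp h2xL).2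
      have := Nat.le_of_dvd hm0 h2xm
      have hx0 : 0 < x := hpos x hxE
      omega
    obtain ⟨s, hsL⟩ := low_chain m hm0 L.card L le_rfl hmemL
      (fun d hd => ⟨hpos d (Finset.mem_filter.mp hd).1, (Finset.mem_filter.mp hd).2⟩)
      (fun x hx y hy => hch x (Finset.mem_filter.mp hx).1 y (Finset.mem_filter.mp hy).1)
      hndL
    have hs3 : s % 3 = 1 := by
      have := hsL m hmemL
      rw [Nat.div_self hm0, mul_one] at this
      omega
    refine ⟨m, s, hm0, ?_⟩
    intro d hdE
    by_cases hdm : d ∣ m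
    · have hdL : d ∈ L := Finset.mem_filter.mpr ⟨hdE, hdm⟩
      obtain ⟨h1, h2⟩ := hsL d hdL
      exact low_eval m s d (hpos d hdE) hdm h1 h2
    · have hmd : m ∣ d := (hch d hdE m hmE).resolve_left hdm
      set e := d / m with he
      have hed : e * m = d := Nat.div_mul_cancel hmd
      have h3e : ¬ 3 ∣ e := by
        intro h3
        apply hnp
        refine ⟨m, hmE, 2 * m, h2mE, d, hdE, h2mE, dvd_rfl, ?_⟩
        rcases hch d hdE (2 * m) h2mE with hd2m | h2md
        · -- then e ∣ 2, contradicting 3 ∣ e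
          exfalso
          have he2 : e ∣ 2 := by
            have : e * m ∣ 2 * m := by rw [hed]; exact hd2m
            exact (mul_dvd_mul_iff_right hm0.ne').mp this
          have := Nat.le_of_dvd (by norm_num) (dvd_trans h3 he2)
          omega
        · obtain ⟨f, hf⟩ := h2md
          have hef : e = 2 * f := by
            apply Nat.eq_of_mul_eq_mul_right hm0
            rw [hed, hf]; ring
          have h3f : 3 ∣ f := by omega
          obtain ⟨g, hg⟩ := h3f
          exact ⟨g, by rw [hf, hg]; ring⟩
      have key : s * d % (3 * m) = m * (s * e % 3) := by
        have e1 : s * d = m * (s * e) := by rw [← hed]; ring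
        rw [e1, show 3 * m = m * 3 by ring, Nat.mul_mod_mul_left]
      rw [key]
      have hse : s * e % 3 = 1 ∨ s * e % 3 = 2 := by
        have hnd3 : ¬ 3 ∣ s * e := by
          intro h
          rcases (Nat.Prime.dvd_mul (by norm_num)).mp h with h | h
          · omega
          · exact h3e h
        omega
      rcases hse with h | h <;> rw [h] <;> omega
  · -- Case B : no ratio-2 step at all; anchor at the maximum
    set m := E.max' hne with hmdef
    have hmE : m ∈ E := E.max'_mem hne
    have hm0 : 0 < m := hpos m hmE
    have hdvdm : ∀ d ∈ E, d ∣ m := by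
      intro d hd
      rcases hch d hd m hmE with h | h
      · exact h
      · have h1 : d ≤ m := E.le_max' d hd
        have h2 : m ≤ d := Nat.le_of_dvd (hpos d hd) h
        have : d = m := by omega
        rw [this]
    obtain ⟨s, hsL⟩ := low_chain m hm0 E.card E le_rfl hmE
      (fun d hd => ⟨hpos d hd, hdvdm d hd⟩) hch
      (fun x hx h2x => hA ⟨x, hx, h2x⟩)
    refine ⟨m, s, hm0, ?_⟩
    intro d hdE
    obtain ⟨h1, h2⟩ := hsL d hdE
    exact low_eval m s d (hpos d hdE) (hdvdm d hdE) h1 h2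

/-- The coloring function: middle-third style coloring. -/
def colorFun (s m : ℕ) (x : ℤ) : ℕ := (((s : ℤ) * x) % (3 * (m : ℤ))).toNat / m

lemma colorFun_lt (s m : ℕ) (hm : 0 < m) (x : ℤ) : colorFun s m x < 3 := by
  have hN : (0 : ℤ) < 3 * (m : ℤ) := by positivity
  have h1 : 0 ≤ (s : ℤ) * x % (3 * (m : ℤ)) := Int.emod_nonneg _ hN.ne'
  have h2 : (s : ℤ) * x % (3 * (m : ℤ)) < 3 * (m : ℤ) := Int.emod_lt_of_pos _ hN
  have h3 : (((s : ℤ) * x) % (3 * (m : ℤ))).toNat < m * 3 := by omega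
  exact Nat.div_lt_of_lt_mul h3

lemma colorFun_ne (s m : ℕ) (hm : 0 < m) {x y : ℤ} (hne : x ≠ y)
    (hv1 : m ≤ s * (x - y).natAbs % (3 * m)) (hv2 : s * (x - y).natAbs % (3 * m) ≤ 2 * m) :
    colorFun s m x ≠ colorFun s m y := by
  intro heq
  set N : ℤ := 3 * (m : ℤ) with hNdef
  have hN0 : (0 : ℤ) < N := by positivity
  set u := (s : ℤ) * x % N with hu
  set w := (s : ℤ) * y % N with hw
  have hu0 : 0 ≤ u := Int.emod_nonneg _ hN0.ne'
  have hu3 : u < N := Int.emod_lt_of_pos _ hN0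
  have hw0 : 0 ≤ w := Int.emod_nonneg _ hN0.ne'
  have hw3 : w < N := Int.emod_lt_of_pos _ hN0
  -- closeness from equal colors
  have hq := Nat.div_add_mod u.toNat m
  have hq' := Nat.div_add_mod w.toNat m
  have hr1 : u.toNat % m < m := Nat.mod_lt _ hm
  have hr2 : w.toNat % m < m := Nat.mod_lt _ hm
  have heq' : u.toNat / m = w.toNat / m := heq
  have hut : (u.toNat : ℤ) = u := Int.toNat_of_nonneg hu0
  have hwt : (w.toNat : ℤ) = w := Int.toNat_of_nonneg hw0
  have hclose : u - w < (m : ℤ) ∧ w - u < (m : ℤ) := by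
    have c1 : (u.toNat : ℤ) = (m : ℤ) * (u.toNat / m : ℕ) + (u.toNat % m : ℕ) := by
      exact_mod_cast congrArg (Nat.cast : ℕ → ℤ) hq.symm
    have c2 : (w.toNat : ℤ) = (m : ℤ) * (w.toNat / m : ℕ) + (w.toNat % m : ℕ) := by
      exact_mod_cast congrArg (Nat.cast : ℕ → ℤ) hq'.symm
    rw [heq'] at c1
    have d1 : ((u.toNat % m : ℕ) : ℤ) < m := by exact_mod_cast hr1
    have d2 : ((w.toNat % m : ℕ) : ℤ) < m := by exact_mod_cast hr2
    have d3 : (0 : ℤ) ≤ ((u.toNat % m : ℕ) : ℤ) := by positivity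
    have d4 : (0 : ℤ) ≤ ((w.toNat % m : ℕ) : ℤ) := by positivity
    constructor <;> nlinarith [c1, c2, hut, hwt]
  set dd := (x - y).natAbs with hdd
  set vZ : ℤ := ((s * dd % (3 * m) : ℕ) : ℤ) with hvZ
  have hvmod : vZ = ((s : ℤ) * (dd : ℤ)) % N := by
    rw [hvZ, hNdef]; push_cast; ring_nf
  have hvb1 : (m : ℤ) ≤ vZ := by rw [hvZ]; exact_mod_cast hv1
  have hvb2 : vZ ≤ 2 * (m : ℤ) := by rw [hvZ]; exact_mod_cast hv2
  have h1' : Int.ModEq N u ((s : ℤ) * x) := Int.emod_emod_of_dvd _ dvd_rfl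
  have h2' : Int.ModEq N w ((s : ℤ) * y) := Int.emod_emod_of_dvd _ dvd_rfl
  have h3' : Int.ModEq N vZ ((s : ℤ) * (dd : ℤ)) := by
    rw [hvmod]; exact Int.emod_emod_of_dvd _ dvd_rfl
  have hsub : Int.ModEq N (u - w) ((s : ℤ) * (x - y)) := by
    have := h1'.sub h2'
    have e : (s : ℤ) * x - (s : ℤ) * y = (s : ℤ) * (x - y) := by ring
    rwa [e] at this
  rcases Int.natAbs_eq (x - y) with hxy | hxy
  · -- x - y = dd
    have hmeq : Int.ModEq N (u - w) vZ := by
      rw [hxy] at hsub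
      exact hsub.trans h3'.symm
    have hdvd : N ∣ vZ - (u - w) := hmeq.dvd
    have hpos' : 0 < vZ - (u - w) := by omega
    have := Int.le_of_dvd hpos' hdvd
    omega
  · -- x - y = -dd
    have hmeq : Int.ModEq N (u - w) (-vZ) := by
      rw [hxy] at hsub
      have e : (s : ℤ) * (-(dd : ℤ)) = -((s : ℤ) * (dd : ℤ)) := by ring
      rw [e] at hsub
      exact hsub.trans h3'.symm.neg
    have hdvd : N ∣ -vZ - (u - w) := hmeq.dvd
    have hdvd' : N ∣ vZ + (u - w) := by
      have h' : N ∣ -(vZ + (u - w)) := by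
        rw [show -(vZ + (u - w)) = -vZ - (u - w) by ring]
        exact hdvd
      exact dvd_neg.mp h'
    have hpos' : 0 < vZ + (u - w) := by omega
    have := Int.le_of_dvd hpos' hdvd'
    omega

/-- Backward direction: pattern-free chains are 3-colorable, via compactness. -/
lemma colorable_of_no_pattern (D : Set ℕ) (hpos : ∀ d ∈ D, 0 < d)
    (hchain : ∀ a ∈ D, ∀ b ∈ D, a ∣ b ∨ b ∣ a)
    (hnp : ¬ ∃ a ∈ D, ∃ b ∈ D, ∃ b' ∈ D, 2 * a ∈ D ∧ 2 * a ∣ b ∧ 3 * b ∣ b') :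
    (distGraph D).Colorable 3 := by
  classical
  letI : TopologicalSpace (Fin 3) := ⊥
  haveI : DiscreteTopology (Fin 3) := ⟨rfl⟩
  let ι := {p : ℤ × ℤ // (distGraph D).Adj p.1 p.2}
  let Z : ι → Set (ℤ → Fin 3) := fun p => {f | f p.1.1 = f p.1.2}ᶜ
  have hZc : ∀ p, IsClosed (Z p) := by
    intro p
    have hopen : IsOpen {f : ℤ → Fin 3 | f p.1.1 = f p.1.2} := by
      have : {f : ℤ → Fin 3 | f p.1.1 = f p.1.2} =
          ⋃ c : Fin 3, ((fun f : ℤ → Fin 3 => f p.1.1) ⁻¹' {c}) ∩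
            ((fun f : ℤ → Fin 3 => f p.1.2) ⁻¹' {c}) := by
        ext f
        simp only [Set.mem_setOf_eq, Set.mem_iUnion, Set.mem_inter_iff, Set.mem_preimage,
          Set.mem_singleton_iff]
        constructor
        · intro h; exact ⟨f p.1.2, h, rfl⟩
        · rintro ⟨c, h1, h2⟩; rw [h1, h2]
      rw [this]
      exact isOpen_iUnion fun c =>
        ((isOpen_discrete _).preimage (continuous_apply _)).inter
          ((isOpen_discrete _).preimage (continuous_apply _))
    exact hopen.isClosed_compl
  by_contra hcol
  have hempty : (Set.univ : Set (ℤ → Fin 3)) ∩ ⋂ p, Z p = ∅ := by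
    by_contra h
    obtain ⟨f, _, hf⟩ := Set.nonempty_iff_ne_empty.mpr h
    apply hcol
    refine ⟨SimpleGraph.Coloring.mk f ?_⟩
    intro v w hadj
    have := Set.mem_iInter.mp hf ⟨(v, w), hadj⟩
    exact this
  obtain ⟨t, ht⟩ := isCompact_univ.elim_finite_subfamily_closed Z hZc hempty
  let Efin : Finset ℕ := t.image (fun p => ((p : ι).1.1 - (p : ι).1.2).natAbs)
  have hED : ∀ d ∈ Efin, d ∈ D := by
    intro d hd
    obtain ⟨p, _, rfl⟩ := Finset.mem_image.mp hd
    exact p.2.2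
  obtain ⟨m, s, hm0, hgood⟩ := exists_good_mod Efin
    (fun d hd => hpos d (hED d hd))
    (fun a ha b hb => hchain a (hED _ ha) b (hED _ hb))
    (by
      rintro ⟨a, ha, b, hb, b', hb', h2a, hd1, hd2⟩
      exact hnp ⟨a, hED _ ha, b, hED _ hb, b', hED _ hb', hED _ h2a, hd1, hd2⟩)
  let f : ℤ → Fin 3 := fun x => ⟨colorFun s m x, colorFun_lt s m hm0 x⟩
  have hf : f ∈ (Set.univ : Set (ℤ → Fin 3)) ∩ ⋂ p ∈ t, Z p := by
    refine ⟨trivial, ?_⟩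
    rw [Set.mem_iInter₂]
    intro p hp
    intro heq
    have heq' : colorFun s m p.1.1 = colorFun s m p.1.2 := congrArg Fin.val heq
    have hdmem : ((p : ι).1.1 - (p : ι).1.2).natAbs ∈ Efin :=
      Finset.mem_image.mpr ⟨p, hp, rfl⟩
    obtain ⟨hg1, hg2⟩ := hgood _ hdmem
    exact colorFun_ne s m hm0 p.2.1 hg1 hg2 heq'
  rw [ht] at hf
  exact Set.notMem_empty f hf

/-- For a divisibility chain `D`, `χ(D) ≤ 3` iff there do not
exist elements `a, b, b' ∈ D` with `2a ∈ D`, `2a ∣ b`, and `3b ∣ b'`. -/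
theorem distGraph_chromaticNumber_le_three_iff (D : Set ℕ)
    (hpos : ∀ d ∈ D, 0 < d) (hchain : ∀ a ∈ D, ∀ b ∈ D, a ∣ b ∨ b ∣ a) :
    (distGraph D).chromaticNumber ≤ 3 ↔
      ¬ ∃ a ∈ D, ∃ b ∈ D, ∃ b' ∈ D, 2 * a ∈ D ∧ 2 * a ∣ b ∧ 3 * b ∣ b' := by
  have hcast : ((3 : ℕ) : ℕ∞) = (3 : ℕ∞) := by norm_cast
  constructor
  · intro hχ hpat
    have hcol : (distGraph D).Colorable 3 := by
      rw [← SimpleGraph.chromaticNumber_le_iff_colorable, hcast]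
      exact hχ
    exact not_colorable_of_pattern D hpos hpat hcol
  · intro hnp
    have hcol := colorable_of_no_pattern D hpos hchain hnp
    rw [← hcast]
    exact SimpleGraph.chromaticNumber_le_iff_colorable.mpr hcol
end

section
/- Let D be a divisibility chain (a set of positive integers totally ordered by the divisibility relation). Then χ(D) ≤ 2 if and only if for all a, b ∈ D with a dividing b, the quotient b/a is odd (equivalently, every ratio between consecutive elements of D is odd). -/
private lemma fin2_key : ∀ c c' e : Fin 2, c ≠ c' → (c = e ↔ ¬ c' = e) := by decide

private lemma fact_eq {a b : ℕ} (ha : 0 < a) (hab : a ∣ b) (hodd : Odd (b / a)) :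
    b.factorization 2 = a.factorization 2 := by
  obtain ⟨q, rfl⟩ := hab
  rw [Nat.mul_div_cancel_left _ ha] at hodd
  rw [Nat.odd_iff] at hodd
  have hq0 : q ≠ 0 := by omega
  rw [Nat.factorization_mul ha.ne' hq0]
  have : q.factorization 2 = 0 :=
    Nat.factorization_eq_zero_of_not_dvd (by intro h; omega)
  simp [this]

/-- For a divisibility chain `D`, `χ(D) ≤ 2` iff for all
`a, b ∈ D` with `a ∣ b`, the quotient `b / a` is odd. -/
theorem distGraph_chromaticNumber_le_two_iff (D : Set ℕ)
    (hpos : ∀ d ∈ D, 0 < d) (hchain : ∀ a ∈ D, ∀ b ∈ D, a ∣ b ∨ b ∣ a) :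
    (distGraph D).chromaticNumber ≤ 2 ↔
      ∀ a ∈ D, ∀ b ∈ D, a ∣ b → Odd (b / a) := by
  have h2 : ((2 : ℕ∞)) = ((2 : ℕ) : ℕ∞) := by norm_cast
  rw [h2, SimpleGraph.chromaticNumber_le_iff_colorable]
  constructor
  · rintro ⟨C⟩ a ha b hb hab
    by_contra hodd
    rw [Nat.not_odd_iff_even] at hodd
    have ha0 := hpos a ha
    have hb0 := hpos b hb
    have hq1 : 1 ≤ b / a := Nat.one_le_div_iff ha0 |>.2 (Nat.le_of_dvd hb0 hab)
    obtain ⟨k, hk⟩ := hodd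
    have hk1 : 1 ≤ k := by omega
    have haZ : (a : ℤ) ≠ 0 := by exact_mod_cast ha0.ne'
    have step : ∀ i : ℕ, C (((i : ℤ) + 1) * a) ≠ C ((i : ℤ) * a) := by
      intro i
      apply C.valid
      refine ⟨fun h => ?_, ?_⟩
      · have := mul_right_cancel₀ haZ h
        omega
      · have : ((i : ℤ) + 1) * a - (i : ℤ) * a = (a : ℤ) := by ring
        rw [this, Int.natAbs_natCast]; exact ha
    have main : ∀ i : ℕ, (C ((i : ℤ) * a) = C 0 ↔ Even i) := by
      intro i
      induction i with
      | zero => simp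
      | succ n ih =>
        have h1 : C (((n : ℤ) + 1) * a) = C 0 ↔ ¬ C ((n : ℤ) * a) = C 0 :=
          fin2_key _ _ _ (step n)
        have h2' : ((n + 1 : ℕ) : ℤ) = (n : ℤ) + 1 := by push_cast; ring
        rw [h2', h1, ih, Nat.even_add_one]
    have hbab : b = (k + k) * a := by rw [← hk, Nat.div_mul_cancel hab]
    have hbeq : (b : ℤ) = ((2 * k : ℕ) : ℤ) * a := by push_cast [hbab]; ring
    have hCb : C b = C 0 := by
      rw [hbeq, main]; exact ⟨k, by ring⟩
    have : C b ≠ C 0 := by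
      apply C.valid
      exact ⟨by exact_mod_cast hb0.ne', by simpa using hb⟩
    exact this hCb
  · intro hquot
    by_cases hD : D = ∅
    · exact ⟨SimpleGraph.Coloring.mk (fun _ => 0) (by intro x y ⟨_, h⟩; simp [hD] at h)⟩
    · obtain ⟨d₀, hd₀⟩ := Set.nonempty_iff_ne_empty.2 hD
      set ν := d₀.factorization 2 with hν
      have struct : ∀ d ∈ D, ∃ m : ℕ, Odd m ∧ d = 2 ^ ν * m := by
        intro d hd
        have hd0 := hpos d hd
        have hfe : d.factorization 2 = ν := by
          rcases hchain d hd d₀ hd₀ with h | h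
          · exact (fact_eq hd0 h (hquot d hd d₀ hd₀ h)).symm
          · exact (fact_eq (hpos d₀ hd₀) h (hquot d₀ hd₀ d hd h)) ▸ rfl
        refine ⟨(d / 2 ^ (d.factorization 2)), ?_, ?_⟩
        · rw [Nat.odd_iff, ← Nat.two_dvd_ne_zero]
          exact Nat.not_dvd_ordCompl Nat.prime_two hd0.ne'
        · rw [← hfe]
          exact (Nat.ordProj_mul_ordCompl_eq_self d 2).symm
      refine ⟨SimpleGraph.Coloring.mk
        (fun x => if Even (x / (2 ^ ν : ℤ)) then 0 else 1) ?_⟩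
      rintro x y ⟨hxy, hd⟩
      obtain ⟨m, hm, hdm⟩ := struct _ hd
      have hcases : x - y = ((2:ℤ) ^ ν * m) ∨ x - y = -((2:ℤ) ^ ν * m) := by
        rcases Int.natAbs_eq (x - y) with h | h
        · left; rw [h, hdm]; push_cast; ring
        · right; rw [h, hdm]; push_cast; ring
      have key : ∃ t : ℤ, Odd t ∧ x = y + 2 ^ ν * t := by
        rcases hcases with h | h
        · exact ⟨m, by exact_mod_cast hm, by linear_combination h⟩
        · refine ⟨-m, ?_, by linear_combination h⟩
          rcases hm with ⟨j, hj⟩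
          exact ⟨-(j : ℤ) - 1, by push_cast [hj]; ring⟩
      obtain ⟨t, ht, hxt⟩ := key
      have hdiv : x / (2 ^ ν : ℤ) = y / (2 ^ ν : ℤ) + t := by
        rw [hxt, mul_comm, Int.add_mul_ediv_right _ _ (by positivity)]
      have hpar : Even (x / (2 ^ ν : ℤ)) ↔ ¬ Even (y / (2 ^ ν : ℤ)) := by
        rw [hdiv, Int.even_add, ← Int.not_odd_iff_even (n := t)]
        tauto
      by_cases hx : Even (x / (2 ^ ν : ℤ))
      · have hy : ¬ Even (y / (2 ^ ν : ℤ)) := hpar.1 hx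
        simp only [if_pos hx, if_neg hy]
        decide
      · have hy : Even (y / (2 ^ ν : ℤ)) := by
          by_contra hy; exact hx (hpar.2 hy)
        simp only [if_neg hx, if_pos hy]
        decide
end

section
/- Let D be a set of positive integers. The graph G(ℤ, D) has no periodic proper coloring (with any set of colors) if and only if D contains a multiple of every positive integer, i.e., for every positive integer k there exists d ∈ D with k | d. -/
lemma periodic_mul {α : Type} (f : ℤ → α) (p : ℤ) (hper : ∀ x, f (x + p) = f x) :
    ∀ (n : ℕ) (x : ℤ), f (x + p * n) = f x := by
  intro n
  induction n with
  | zero => simp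
  | succ n ih =>
    intro x
    have h : x + p * ((n : ℤ) + 1) = (x + p) + p * n := by ring
    push_cast
    rw [h, ih, hper]

/-- For a set `D` of positive integers, `G(ℤ, D)` has no
periodic proper coloring (with any set of colors) iff `D` contains a multiple of
every positive integer. -/
theorem distGraph_no_periodic_coloring_iff (D : Set ℕ) (hpos : ∀ d ∈ D, 0 < d) :
    (¬ ∃ (α : Type) (f : ℤ → α), (∀ x y : ℤ, (distGraph D).Adj x y → f x ≠ f y) ∧
        ∃ p : ℤ, 0 < p ∧ ∀ x : ℤ, f (x + p) = f x) ↔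
      ∀ k : ℕ, 0 < k → ∃ d ∈ D, k ∣ d := by
  constructor
  · intro h k hk
    by_contra hcon
    push_neg at hcon
    apply h
    refine ⟨ZMod k, fun x => (x : ZMod k), ?_, (k : ℤ), by exact_mod_cast hk, ?_⟩
    · rintro x y ⟨hxy, hd⟩ heq
      apply hcon _ hd
      have hdvd : (k : ℤ) ∣ x - y := by
        rw [ZMod.intCast_eq_intCast_iff] at heq
        exact (Int.ModEq.dvd heq.symm)
      rwa [← Int.natCast_dvd_natCast, Int.dvd_natAbs]
    · intro x
      simp only [Int.cast_add, Int.cast_natCast, ZMod.natCast_self, add_zero]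
  · intro hD h
    obtain ⟨α, f, hf, p, hp, hper⟩ := h
    obtain ⟨d, hdD, m, hm⟩ := hD p.toNat (by omega)
    have hd0 : 0 < d := hpos d hdD
    have hadj : (distGraph D).Adj 0 (d : ℤ) := by
      constructor
      · intro h0; omega
      · simpa using hdD
    have hpd : (d : ℤ) = p * m := by
      have : (p.toNat : ℤ) = p := Int.toNat_of_nonneg hp.le
      rw [hm]; push_cast; rw [this]
    have : f (d : ℤ) = f 0 := by
      have := periodic_mul f p hper m 0
      rwa [zero_add, ← hpd] at this
    exact hf 0 (d : ℤ) hadj this.symm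
end

section
/- Let D = {n! : n a positive integer} be the set of all factorials. Then the chromatic number of the factorial distance graph G(ℤ, D) equals 4, i.e., χ(D) = 4. -/
/-! ### Auxiliary construction for the 4-colouring -/

/-- digits of our magic real number in the factorial base -/
def fdig : ℕ → ℕ := fun k => if k ≤ 3 then 0 else (4 - (k - 1) % 4) % 4

/-- the integer parts `⌊γ · n!⌋` -/
def fA : ℕ → ℕ
  | 0 => 0
  | n + 1 => (n + 1) * fA n + fdig (n + 1)

lemma fdig_le (k : ℕ) : fdig k ≤ 3 := by
  unfold fdig; split
  · omega
  · omega

lemma fdig_small (k : ℕ) (h : k ≤ 3) : fdig k = 0 := by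
  unfold fdig; simp [h]

/-- `γ` itself. -/
noncomputable def fgam : ℝ := ∑' k, (fdig k : ℝ) / (Nat.factorial k)

lemma fact_ge (n : ℕ) : ∀ j : ℕ, n.factorial * (n + 1) ^ j ≤ (n + j).factorial := by
  intro j
  induction j with
  | zero => simp
  | succ j ih =>
    have h1 : (n + (j + 1)).factorial = (n + j + 1) * (n + j).factorial := by
      rw [show n + (j+1) = (n + j) + 1 by ring, Nat.factorial_succ]
    rw [h1, pow_succ]
    calc n.factorial * ((n + 1) ^ j * (n + 1))
        = (n + 1) * (n.factorial * (n + 1) ^ j) := by ring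
      _ ≤ (n + j + 1) * (n + j).factorial :=
          Nat.mul_le_mul (by omega) ih

lemma fsummable : Summable (fun k => (fdig k : ℝ) / (Nat.factorial k)) := by
  apply Summable.of_nonneg_of_le (f := fun k => (3 : ℝ) * (1 / (Nat.factorial k)))
  · intro n; positivity
  · intro n
    have h3 : (fdig n : ℝ) ≤ 3 := by exact_mod_cast fdig_le n
    have hf : (0:ℝ) < (Nat.factorial n : ℝ) := by positivity
    rw [mul_one_div]
    exact (div_le_div_iff_of_pos_right hf).2 h3
  · have h := Real.summable_pow_div_factorial 1
    have h1 : Summable (fun n : ℕ => (1:ℝ) / (Nat.factorial n)) := by simpa using h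
    exact h1.mul_left 3

lemma fgam_nonneg : 0 ≤ fgam := tsum_nonneg (fun k => by positivity)

lemma geom_tsum (r : ℝ) (h0 : 0 ≤ r) (h1 : r < 1) :
    ∑' k : ℕ, 3 * r ^ (k + 1) = 3 * r / (1 - r) := by
  have hg : ∑' k : ℕ, r ^ k = (1 - r)⁻¹ := tsum_geometric_of_lt_one h0 h1
  calc ∑' k : ℕ, 3 * r ^ (k + 1) = ∑' k : ℕ, r ^ k * (3 * r) := by
        apply tsum_congr; intro k; ring
    _ = (1 - r)⁻¹ * (3 * r) := by rw [tsum_mul_right, hg]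
    _ = 3 * r / (1 - r) := by ring

lemma fgam_lt : fgam < 1 / 6 := by
  have hsum := fsummable
  have hsplit := Summable.sum_add_tsum_nat_add (f := fun k => (fdig k : ℝ) / (Nat.factorial k)) 4 hsum
  have hfin : ∑ i ∈ Finset.range 4, (fdig i : ℝ) / (Nat.factorial i) = 0 := by
    have : ∀ i ∈ Finset.range 4, (fdig i : ℝ) / (Nat.factorial i) = 0 := by
      intro i hi
      rw [Finset.mem_range] at hi
      rw [fdig_small i (by omega)]; simp
    rw [Finset.sum_congr rfl this]; simp
  have htail : ∑' k : ℕ, (fdig (k + 4) : ℝ) / (Nat.factorial (k + 4))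
      ≤ ∑' k : ℕ, (1 / 8 : ℝ) * (1 / 5) ^ k := by
    apply Summable.tsum_le_tsum
    · intro k
      have hb : (24 : ℕ) * 5 ^ k ≤ (4 + k).factorial := fact_ge 4 k
      have hb' : (24 : ℝ) * 5 ^ k ≤ ((k + 4).factorial : ℝ) := by
        rw [show k + 4 = 4 + k by ring]
        exact_mod_cast hb
      have hd : (fdig (k + 4) : ℝ) ≤ 3 := by exact_mod_cast fdig_le (k + 4)
      rw [div_le_iff₀ (by positivity)]
      calc (fdig (k+4) : ℝ) ≤ 3 := hd
        _ = 1/8 * (1/5)^k * (24 * 5 ^ k) := by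
            rw [div_pow, one_pow]
            field_simp
            ring
        _ ≤ 1/8 * (1/5)^k * ((k + 4).factorial : ℝ) := by
            apply mul_le_mul_of_nonneg_left hb' (by positivity)
    · exact (summable_nat_add_iff 4).2 hsum
    · apply Summable.mul_left
      exact summable_geometric_of_lt_one (by norm_num) (by norm_num)
  have hgeom : ∑' k : ℕ, (1 / 8 : ℝ) * (1 / 5) ^ k = 5 / 32 := by
    rw [tsum_mul_left, tsum_geometric_of_lt_one (by norm_num) (by norm_num)]
    norm_num
  have : fgam = ∑' k : ℕ, (fdig (k + 4) : ℝ) / (Nat.factorial (k + 4)) := by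
    rw [fgam, ← hsplit, hfin, zero_add]
  rw [this]
  calc ∑' k : ℕ, (fdig (k + 4) : ℝ) / (Nat.factorial (k + 4)) ≤ 5/32 := by
        rw [← hgeom]; exact htail
    _ < 1/6 := by norm_num

/-- the finite part of `γ n!` equals `fA n` -/
lemma fA_sum (n : ℕ) :
    ∑ k ∈ Finset.range (n + 1), (fdig k : ℝ) * (Nat.factorial n) / (Nat.factorial k)
      = fA n := by
  induction n with
  | zero => simp [fA, fdig_small 0 (by norm_num)]
  | succ n ih =>
    rw [Finset.sum_range_succ]
    have h1 : (fdig (n+1) : ℝ) * (Nat.factorial (n+1)) / (Nat.factorial (n+1))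
        = fdig (n+1) := by
      field_simp
    rw [h1]
    have h2 : ∑ k ∈ Finset.range (n + 1),
        (fdig k : ℝ) * (Nat.factorial (n+1)) / (Nat.factorial k)
        = (n + 1) * ∑ k ∈ Finset.range (n + 1),
            (fdig k : ℝ) * (Nat.factorial n) / (Nat.factorial k) := by
      rw [Finset.mul_sum]
      apply Finset.sum_congr rfl
      intro k _
      rw [Nat.factorial_succ]
      push_cast
      ring
    rw [h2, ih]
    show ((n:ℝ) + 1) * (fA n) + fdig (n+1) = ((fA (n+1) : ℕ) : ℝ)
    rw [show fA (n+1) = (n + 1) * fA n + fdig (n + 1) from rfl]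
    push_cast
    ring

/-- key floor computation -/
lemma floor_fgam_fact (n : ℕ) (hn : 1 ≤ n) :
    ⌊fgam * (Nat.factorial n : ℝ)⌋ = (fA n : ℤ) := by
  rcases le_or_gt n 3 with h3 | h4
  · -- small cases: fA n = 0 and γ n! < 1
    have hA : fA n = 0 := by
      interval_cases n <;> simp [fA, fdig]
    have hfle : (Nat.factorial n : ℝ) ≤ 6 := by
      have : Nat.factorial n ≤ 6 := by
        interval_cases n <;> simp [Nat.factorial]
      exact_mod_cast this
    have hpos : (0:ℝ) ≤ (Nat.factorial n : ℝ) := by positivity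
    rw [hA]
    rw [show ((0:ℕ):ℤ) = 0 from rfl, Int.floor_eq_zero_iff, Set.mem_Ico]
    refine ⟨mul_nonneg fgam_nonneg hpos, ?_⟩
    nlinarith [fgam_lt, fgam_nonneg, hfle, hpos]
  · -- n ≥ 4
    have hsum := fsummable
    have hsumF : Summable (fun k => (fdig k : ℝ) * (Nat.factorial n) / (Nat.factorial k)) := by
      have := hsum.mul_right ((Nat.factorial n : ℝ))
      apply this.congr
      intro k; ring
    have hsplit := Summable.sum_add_tsum_nat_add
      (f := fun k => (fdig k : ℝ) * (Nat.factorial n) / (Nat.factorial k)) (n+1) hsumF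
    have hexp : fgam * (Nat.factorial n : ℝ)
        = ∑' k, (fdig k : ℝ) * (Nat.factorial n) / (Nat.factorial k) := by
      rw [fgam, ← tsum_mul_right]
      apply tsum_congr; intro k; ring
    set T : ℝ := ∑' k : ℕ, (fdig (k + (n+1)) : ℝ) * (Nat.factorial n) / (Nat.factorial (k + (n+1))) with hT
    have hval : fgam * (Nat.factorial n : ℝ) = (fA n : ℝ) + T := by
      rw [hexp, ← hsplit, fA_sum n]
    have hTnonneg : 0 ≤ T := tsum_nonneg (fun k => by positivity)
    have hTsummable : Summable (fun k : ℕ =>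
        (fdig (k + (n+1)) : ℝ) * (Nat.factorial n) / (Nat.factorial (k + (n+1)))) :=
      (summable_nat_add_iff (f := fun k => (fdig k : ℝ) * (Nat.factorial n) / (Nat.factorial k)) (n+1)).2 hsumF
    have hTlt : T < 1 := by
      have hr0 : (0:ℝ) ≤ 1 / (n + 1) := by positivity
      have hr1 : (1:ℝ) / (n + 1) < 1 := by
        rw [div_lt_one (by positivity)]
        have : (1:ℝ) ≤ n := by exact_mod_cast hn
        linarith
      have hgsum : Summable (fun k : ℕ => 3 * ((1:ℝ) / (n+1)) ^ (k + 1)) := by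
        apply ((summable_geometric_of_lt_one hr0 hr1).mul_left (3 * ((1:ℝ)/(n+1)))).congr
        intro k
        ring
      have hle : T ≤ ∑' k : ℕ, 3 * ((1:ℝ) / (n+1)) ^ (k + 1) := by
        apply Summable.tsum_le_tsum _ hTsummable hgsum
        · intro k
          have hb : Nat.factorial n * (n + 1) ^ (k+1) ≤ (n + (k+1)).factorial :=
            fact_ge n (k+1)
          have hb' : (Nat.factorial n : ℝ) * ((n:ℝ) + 1) ^ (k+1)
              ≤ ((k + (n+1)).factorial : ℝ) := by
            rw [show k + (n+1) = n + (k+1) by ring]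
            exact_mod_cast hb
          have hd : (fdig (k + (n+1)) : ℝ) ≤ 3 := by exact_mod_cast fdig_le _
          rw [div_le_iff₀ (by positivity)]
          have hrpow : ((1:ℝ)/(n+1)) ^ (k+1) * ((n:ℝ)+1)^(k+1) = 1 := by
            rw [div_pow, one_pow, div_mul_cancel₀]
            positivity
          calc (fdig (k + (n+1)) : ℝ) * (Nat.factorial n)
              ≤ 3 * (Nat.factorial n) := by
                apply mul_le_mul_of_nonneg_right hd (by positivity)
            _ = 3 * ((1:ℝ)/(n+1))^(k+1) * ((Nat.factorial n) * ((n:ℝ)+1)^(k+1)) := by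
                rw [mul_assoc, mul_comm ((Nat.factorial n : ℝ)), ← mul_assoc (((1:ℝ)/(n+1))^(k+1)), hrpow, one_mul]
            _ ≤ 3 * ((1:ℝ)/(n+1))^(k+1) * ((k + (n+1)).factorial : ℝ) := by
                apply mul_le_mul_of_nonneg_left hb' (by positivity)
      have hgeq : ∑' k : ℕ, 3 * ((1:ℝ) / (n+1)) ^ (k + 1) = 3 / n := by
        rw [geom_tsum _ hr0 hr1]
        have hn0 : (n:ℝ) ≠ 0 := by positivity
        field_simp
        rw [add_sub_cancel_right, div_self hn0]
      have : T ≤ 3 / (n:ℝ) := hgeq ▸ hle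
      calc T ≤ 3 / (n:ℝ) := this
        _ ≤ 3 / 4 := by
            apply div_le_div_of_nonneg_left (by norm_num) (by norm_num)
            exact_mod_cast h4
        _ < 1 := by norm_num
    rw [hval]
    rw [Int.floor_eq_iff]
    push_cast
    constructor
    · linarith
    · linarith

lemma fA_mod (n : ℕ) (hn : 4 ≤ n) : fA n % 4 = 1 := by
  induction n, hn using Nat.le_induction with
  | base => decide
  | succ n hn ih =>
    obtain ⟨q, hq⟩ : ∃ q, fA n = 4 * q + 1 := ⟨fA n / 4, by omega⟩
    have hd : fdig (n+1) = (4 - n % 4) % 4 := by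
      unfold fdig
      rw [if_neg (by omega)]
      simp
    have hstep : fA (n+1) = (n+1) * fA n + fdig (n+1) := rfl
    have hexpand : fA (n+1) = 4 * ((n+1) * q) + (n + 1) + (4 - n % 4) % 4 := by
      rw [hstep, hq, hd]; ring
    omega

lemma key_mod (n : ℕ) (hn : 1 ≤ n) :
    (Nat.factorial n + fA n) % 4 = 1 ∨ (Nat.factorial n + fA n) % 4 = 2 := by
  rcases le_or_gt n 3 with h3 | h4
  · interval_cases n <;> decide
  · have h1 : Nat.factorial n % 4 = 0 := by
      have : 4 ∣ Nat.factorial n := Nat.dvd_factorial (by norm_num) (by omega)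
      omega
    have h2 := fA_mod n (by omega)
    omega

/-- the colouring -/
noncomputable def fcol : ℤ → ZMod 4 := fun x => ((x + ⌊fgam * (x : ℝ)⌋ : ℤ) : ZMod 4)

lemma fcol_ne (x : ℤ) (m : ℕ) (hm : 0 < m) :
    fcol (x + (Nat.factorial m : ℤ)) ≠ fcol x := by
  intro heq
  set d : ℤ := (Nat.factorial m : ℤ) with hd
  have hF : ⌊fgam * ((d : ℤ) : ℝ)⌋ = (fA m : ℤ) := by
    rw [hd]
    push_cast
    exact floor_fgam_fact m hm
  -- floor difference bounds
  have hsum : fgam * ((x + d : ℤ) : ℝ) = fgam * (x:ℝ) + fgam * ((d:ℤ):ℝ) := by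
    push_cast; ring
  have hlow : ⌊fgam * (x:ℝ)⌋ + (fA m : ℤ) ≤ ⌊fgam * ((x + d : ℤ) : ℝ)⌋ := by
    rw [hsum, ← hF]
    rw [Int.le_floor]
    push_cast
    have h1 := Int.floor_le (fgam * (x:ℝ))
    have h2 := Int.floor_le (fgam * ((d:ℤ):ℝ))
    linarith
  have hhigh : ⌊fgam * ((x + d : ℤ) : ℝ)⌋ ≤ ⌊fgam * (x:ℝ)⌋ + (fA m : ℤ) + 1 := by
    have : ⌊fgam * ((x + d : ℤ) : ℝ)⌋ < ⌊fgam * (x:ℝ)⌋ + (fA m : ℤ) + 2 := by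
      rw [Int.floor_lt, hsum, ← hF]
      push_cast
      have h1 := Int.lt_floor_add_one (fgam * (x:ℝ))
      have h2 := Int.lt_floor_add_one (fgam * ((d:ℤ):ℝ))
      linarith
    omega
  -- from colour equality, divisibility
  have hdvd : (4:ℤ) ∣ ((x + d + ⌊fgam * ((x + d : ℤ) : ℝ)⌋) - (x + ⌊fgam * (x:ℝ)⌋)) := by
    have : (((x + d + ⌊fgam * ((x + d : ℤ) : ℝ)⌋ : ℤ) : ZMod 4))
        = ((x + ⌊fgam * (x:ℝ)⌋ : ℤ) : ZMod 4) := heq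
    have h0 : (((x + d + ⌊fgam * ((x + d : ℤ) : ℝ)⌋) - (x + ⌊fgam * (x:ℝ)⌋) : ℤ) : ZMod 4) = 0 := by
      push_cast
      rw [sub_eq_zero]
      push_cast at this
      exact this
    exact_mod_cast (ZMod.intCast_zmod_eq_zero_iff_dvd _ 4).1 h0
  have hmod := key_mod m hm
  -- conclude
  have hs : (0:ℤ) ≤ (Nat.factorial m : ℤ) + (fA m : ℤ) := by positivity
  set D : ℤ := (x + d + ⌊fgam * ((x + d : ℤ) : ℝ)⌋) - (x + ⌊fgam * (x:ℝ)⌋) with hD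
  have hD1 : d + (⌊fgam * (x:ℝ)⌋ + (fA m : ℤ)) - (x + ⌊fgam * (x:ℝ)⌋) + x ≤ D := by
    rw [hD]; omega
  have hDlow : (Nat.factorial m : ℤ) + (fA m : ℤ) ≤ D := by rw [hD, hd]; omega
  have hDhigh : D ≤ (Nat.factorial m : ℤ) + (fA m : ℤ) + 1 := by rw [hD, hd]; omega
  have hcast : ((Nat.factorial m + fA m : ℕ) : ℤ) = (Nat.factorial m : ℤ) + (fA m : ℤ) := by
    push_cast; ring
  rcases hmod with h | h <;>
  · have : ((Nat.factorial m + fA m : ℕ)) % 4 = 1 ∨ ((Nat.factorial m + fA m : ℕ)) % 4 = 2 := by omega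
    omega

/-- the factorial distance set -/
def factD : Set ℕ := {n : ℕ | ∃ m : ℕ, 0 < m ∧ n = Nat.factorial m}

lemma factD_adj (x : ℤ) (m : ℕ) (hm : 0 < m) :
    (distGraph factD).Adj x (x + (Nat.factorial m : ℤ)) := by
  constructor
  · have : (0:ℤ) < (Nat.factorial m : ℤ) := by
      exact_mod_cast Nat.factorial_pos m
    omega
  · have : (x - (x + (Nat.factorial m : ℤ))) = -(Nat.factorial m : ℤ) := by ring
    rw [this, Int.natAbs_neg, Int.natAbs_natCast]
    exact ⟨m, hm, rfl⟩

lemma fcol_valid : ∀ {x y : ℤ}, (distGraph factD).Adj x y → fcol x ≠ fcol y := by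
  intro x y ⟨hne, habs⟩
  obtain ⟨m, hm, hfact⟩ := habs
  have := Int.natAbs_eq (x - y)
  rw [hfact] at this
  rcases this with h | h
  · -- x = y + m!
    have hx : x = y + (Nat.factorial m : ℤ) := by omega
    rw [hx]
    exact fcol_ne y m hm
  · -- y = x + m!
    have hy : y = x + (Nat.factorial m : ℤ) := by omega
    rw [hy]
    exact (fcol_ne x m hm).symm

/-- The chromatic number of the factorial distance graph equals 4. -/
theorem factorialDistGraph_chromaticNumber_eq_four :
    (distGraph {n : ℕ | ∃ m : ℕ, 0 < m ∧ n = Nat.factorial m}).chromaticNumber = 4 := by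
  have hGd : (distGraph {n : ℕ | ∃ m : ℕ, 0 < m ∧ n = Nat.factorial m}) = distGraph factD := rfl
  rw [hGd]
  set G := distGraph factD with hG
  -- upper bound
  have hcol : G.Colorable 4 := by
    have C : G.Coloring (ZMod 4) := SimpleGraph.Coloring.mk fcol (fun h => fcol_valid h)
    have := C.colorable
    rwa [ZMod.card 4] at this
  have hupper : G.chromaticNumber ≤ 4 := by
    have := hcol.chromaticNumber_le
    exact_mod_cast this
  -- lower bound
  have hnot3 : ¬ G.Colorable 3 := by
    rintro ⟨C⟩
    have adj1 : ∀ x : ℤ, G.Adj x (x + 1) := by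
      intro x
      have := factD_adj x 1 (by norm_num)
      simpa [Nat.factorial] using this
    have adj2 : ∀ x : ℤ, G.Adj x (x + 2) := by
      intro x
      have := factD_adj x 2 (by norm_num)
      simpa [Nat.factorial] using this
    have adj6 : ∀ x : ℤ, G.Adj x (x + 6) := by
      intro x
      have := factD_adj x 3 (by norm_num)
      simpa [Nat.factorial] using this
    have step : ∀ x : ℤ, C (x + 3) = C x := by
      intro x
      have h01 : C x ≠ C (x+1) := C.valid (adj1 x)
      have h02 : C x ≠ C (x+2) := C.valid (adj2 x)
      have h12 : C (x+1) ≠ C (x+2) := by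
        have := C.valid (adj1 (x+1))
        rwa [show x + 1 + 1 = x + 2 by ring] at this
      have h13 : C (x+1) ≠ C (x+3) := by
        have := C.valid (adj2 (x+1))
        rwa [show x + 1 + 2 = x + 3 by ring] at this
      have h23 : C (x+2) ≠ C (x+3) := by
        have := C.valid (adj1 (x+2))
        rwa [show x + 2 + 1 = x + 3 by ring] at this
      have b0 : (C x).val < 3 := (C x).isLt
      have b1 : (C (x+1)).val < 3 := (C (x+1)).isLt
      have b2 : (C (x+2)).val < 3 := (C (x+2)).isLt
      have b3 : (C (x+3)).val < 3 := (C (x+3)).isLt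
      have v01 : (C x).val ≠ (C (x+1)).val := fun h => h01 (Fin.ext h)
      have v02 : (C x).val ≠ (C (x+2)).val := fun h => h02 (Fin.ext h)
      have v12 : (C (x+1)).val ≠ (C (x+2)).val := fun h => h12 (Fin.ext h)
      have v13 : (C (x+1)).val ≠ (C (x+3)).val := fun h => h13 (Fin.ext h)
      have v23 : (C (x+2)).val ≠ (C (x+3)).val := fun h => h23 (Fin.ext h)
      apply Fin.ext
      omega
    have e3 : C 3 = C 0 := by
      have := step 0; simpa using this
    have e6 : C 6 = C 3 := by
      have := step 3; norm_num at this; exact this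
    have h06 : C 0 ≠ C 6 := C.valid (by simpa using adj6 0)
    exact h06 (by rw [e6, e3])
  have hlower : 4 ≤ G.chromaticNumber := by
    by_contra h
    push_neg at h
    have h3 : G.chromaticNumber ≤ 3 := by
      have : G.chromaticNumber < 3 + 1 := by exact_mod_cast h
      exact Order.le_of_lt_add_one this
    rw [show (3 : ℕ∞) = ((3:ℕ) : ℕ∞) by norm_num] at h3
    exact hnot3 (SimpleGraph.chromaticNumber_le_iff_colorable.1 h3)
  exact le_antisymm hupper hlower
end
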